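/- arXiv:math/9802066 — 5 statements merged into one kernel-verified Lean document; each statement's English description precedes it below -/
import Mathlib

section
/- Let G be a group with central subgroup B containing [G,G], let U, V ≤ G with [V,U] ⊆ U, let L abelian and β : G × G → L biadditive with [G,G] contained in both the left and right kernels of β. Suppose f_U : U → L and f_V : V → L agree on U ∩ V and each satisfies f(xy) = f(x)+f(y)+β(x,y) on its domain, and f_U([x,y]) = β(x,y) - β(y,x) whenever x ∈ V, y ∈ U with [x,y] ∈ U. Then the map f_W : UV → L defined by f_W(uv) = f_U(u) + f_V(v) + β(u,v) is well-defined, extends f_U and f_V, and satisfies f_W(xy) = f_W(x) + f_W(y) + β(x,y) for all x, y ∈ UV. -/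
open scoped commutatorElement

/-- Extension lemma: `G` a group with central subgroup `B` containing `[G,G]`, `U`, `V`
subgroups with `[V,U] ⊆ U`, `L` abelian, `β : G × G → L` biadditive with commutators in
both kernels. If `f_U`, `f_V` agree on `U ∩ V`, each satisfies the functional equation
`f(xy) = f(x)+f(y)+β(x,y)` on its subgroup, and `f_U([x,y]) = β(x,y)-β(y,x)` for
`x ∈ V, y ∈ U` with `[x,y] ∈ U`, then `f_W(uv) = f_U(u)+f_V(v)+β(u,v)` gives a
well-defined map on `UV` extending both and satisfying the functional equation. -/
theorem extension_lemma {G L : Type*} [Group G] [AddCommGroup L]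
    (B : Subgroup G) (hBcentral : B ≤ Subgroup.center G)
    (hcomm : ∀ x y : G, ⁅x, y⁆ ∈ B)
    (U V : Subgroup G) (hVU : ∀ v ∈ V, ∀ u ∈ U, ⁅v, u⁆ ∈ U)
    (β : G → G → L)
    (hβl : ∀ x x' y : G, β (x * x') y = β x y + β x' y)
    (hβr : ∀ x y y' : G, β x (y * y') = β x y + β x y')
    (hβcomm : ∀ x y z : G, β ⁅x, y⁆ z = 0 ∧ β z ⁅x, y⁆ = 0)
    (fU fV : G → L)
    (hagree : ∀ x : G, x ∈ U → x ∈ V → fU x = fV x)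
    (hfU : ∀ x ∈ U, ∀ y ∈ U, fU (x * y) = fU x + fU y + β x y)
    (hfV : ∀ x ∈ V, ∀ y ∈ V, fV (x * y) = fV x + fV y + β x y)
    (hfUcomm : ∀ x ∈ V, ∀ y ∈ U, ⁅x, y⁆ ∈ U → fU ⁅x, y⁆ = β x y - β y x) :
    ∃ fW : G → L,
      (∀ u ∈ U, ∀ v ∈ V, fW (u * v) = fU u + fV v + β u v) ∧
      (∀ u ∈ U, fW u = fU u) ∧
      (∀ v ∈ V, fW v = fV v) ∧
      (∀ x y : G, (∃ u ∈ U, ∃ v ∈ V, x = u * v) → (∃ u ∈ U, ∃ v ∈ V, y = u * v) →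
        fW (x * y) = fW x + fW y + β x y) := by
  classical
  -- basic facts about β
  have hβ1r : ∀ x : G, β x 1 = 0 := by
    intro x
    have h := hβr x 1 1
    rw [one_mul] at h
    exact add_left_cancel (h.symm.trans (add_zero _).symm)
  have hβ1l : ∀ y : G, β 1 y = 0 := by
    intro y
    have h := hβl 1 1 y
    rw [one_mul] at h
    exact add_left_cancel (h.symm.trans (add_zero _).symm)
  have hβinvr : ∀ x y : G, β x y⁻¹ = -β x y := by
    intro x y
    have h := hβr x y y⁻¹
    rw [mul_inv_cancel, hβ1r] at h
    exact eq_neg_of_add_eq_zero_left (by rw [add_comm]; exact h.symm)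
  have hβinvl : ∀ x y : G, β x⁻¹ y = -β x y := by
    intro x y
    have h := hβl x x⁻¹ y
    rw [mul_inv_cancel, hβ1l] at h
    exact eq_neg_of_add_eq_zero_left (by rw [add_comm]; exact h.symm)
  -- basic facts about fU, fV
  have hfU1 : fU 1 = 0 := by
    have h := hfU 1 U.one_mem 1 U.one_mem
    rw [one_mul, hβ1l, add_zero] at h
    exact right_eq_add.mp h
  have hfV1 : fV 1 = 0 := by
    have h := hfV 1 V.one_mem 1 V.one_mem
    rw [one_mul, hβ1l, add_zero] at h
    exact right_eq_add.mp h
  have hfVinv : ∀ v ∈ V, fV v⁻¹ = -fV v + β v v := by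
    intro v hv
    have h := hfV v hv v⁻¹ (V.inv_mem hv)
    rw [mul_inv_cancel, hfV1, hβinvr] at h
    rw [eq_neg_add_iff_add_eq]
    have h3 := h.symm
    rwa [add_neg_eq_zero] at h3
  -- well-definedness of the candidate map
  have wd : ∀ u₁ ∈ U, ∀ v₁ ∈ V, ∀ u₂ ∈ U, ∀ v₂ ∈ V, u₁ * v₁ = u₂ * v₂ →
      fU u₁ + fV v₁ + β u₁ v₁ = fU u₂ + fV v₂ + β u₂ v₂ := by
    intro u₁ hu₁ v₁ hv₁ u₂ hu₂ v₂ hv₂ heq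
    have hwV' : u₂⁻¹ * u₁ = v₂ * v₁⁻¹ := by
      calc u₂⁻¹ * u₁ = u₂⁻¹ * (u₁ * v₁) * v₁⁻¹ := by group
        _ = u₂⁻¹ * (u₂ * v₂) * v₁⁻¹ := by rw [heq]
        _ = v₂ * v₁⁻¹ := by group
    have key : ∃ w, w ∈ U ∧ w ∈ V ∧ u₁ = u₂ * w ∧ v₁ = w⁻¹ * v₂ := by
      refine ⟨u₂⁻¹ * u₁, U.mul_mem (U.inv_mem hu₂) hu₁, ?_, by group, ?_⟩
      · rw [hwV']; exact V.mul_mem hv₂ (V.inv_mem hv₁)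
      · rw [hwV']; group
    obtain ⟨w, hwU, hwV, rfl, rfl⟩ := key
    rw [hfU u₂ hu₂ w hwU, hfV w⁻¹ (V.inv_mem hwV) v₂ hv₂, hfVinv w hwV,
      hagree w hwU hwV]
    simp only [hβl, hβr, hβinvl, hβinvr]
    abel
  -- define fW via choice
  set fW : G → L := fun x =>
    if h : ∃ u ∈ U, ∃ v ∈ V, x = u * v then
      fU h.choose + fV h.choose_spec.2.choose + β h.choose h.choose_spec.2.choose
    else 0 with hfWdef
  have hfWmul : ∀ u ∈ U, ∀ v ∈ V, fW (u * v) = fU u + fV v + β u v := by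
    intro u hu v hv
    have h : ∃ u' ∈ U, ∃ v' ∈ V, u * v = u' * v' := ⟨u, hu, v, hv, rfl⟩
    rw [hfWdef]
    simp only [dif_pos h]
    exact wd h.choose h.choose_spec.1 h.choose_spec.2.choose
      h.choose_spec.2.choose_spec.1 u hu v hv h.choose_spec.2.choose_spec.2.symm
  have hfWU : ∀ u ∈ U, fW u = fU u := by
    intro u hu
    have := hfWmul u hu 1 V.one_mem
    rw [mul_one, hfV1, hβ1r] at this
    rw [this]; abel
  have hfWV : ∀ v ∈ V, fW v = fV v := by
    intro v hv
    have := hfWmul 1 U.one_mem v hv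
    rw [one_mul, hfU1, hβ1l] at this
    rw [this]; abel
  refine ⟨fW, hfWmul, hfWU, hfWV, ?_⟩
  rintro x y ⟨u₁, hu₁, v₁, hv₁, rfl⟩ ⟨u₂, hu₂, v₂, hv₂, rfl⟩
  have hcU : ⁅v₁, u₂⁆ ∈ U := hVU v₁ hv₁ u₂ hu₂
  have hcB : ⁅v₁, u₂⁆ ∈ B := hcomm v₁ u₂
  have hccent : ∀ g : G, ⁅v₁, u₂⁆ * g = g * ⁅v₁, u₂⁆ := fun g =>
    ((Subgroup.mem_center_iff.mp (hBcentral hcB)) g).symm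
  have hswap : v₁ * u₂ = ⁅v₁, u₂⁆ * (u₂ * v₁) := by group
  have hprod : u₁ * v₁ * (u₂ * v₂) = (u₁ * (u₂ * ⁅v₁, u₂⁆)) * (v₁ * v₂) := by
    calc u₁ * v₁ * (u₂ * v₂) = u₁ * (v₁ * u₂) * v₂ := by group
      _ = u₁ * (⁅v₁, u₂⁆ * (u₂ * v₁)) * v₂ := by rw [hswap]
      _ = u₁ * (⁅v₁, u₂⁆ * u₂) * (v₁ * v₂) := by group
      _ = (u₁ * (u₂ * ⁅v₁, u₂⁆)) * (v₁ * v₂) := by rw [hccent u₂]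
  rw [hprod, hfWmul _ (U.mul_mem hu₁ (U.mul_mem hu₂ hcU)) _ (V.mul_mem hv₁ hv₂),
    hfWmul u₁ hu₁ v₁ hv₁, hfWmul u₂ hu₂ v₂ hv₂]
  have hfUc : fU ⁅v₁, u₂⁆ = β v₁ u₂ - β u₂ v₁ := hfUcomm v₁ hv₁ u₂ hu₂ hcU
  have hβcl : ∀ z : G, β ⁅v₁, u₂⁆ z = 0 := fun z => (hβcomm v₁ u₂ z).1
  have hβcr : ∀ z : G, β z ⁅v₁, u₂⁆ = 0 := fun z => (hβcomm v₁ u₂ z).2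
  rw [hfU u₁ hu₁ (u₂ * ⁅v₁, u₂⁆) (U.mul_mem hu₂ hcU), hfU u₂ hu₂ ⁅v₁, u₂⁆ hcU,
    hfV v₁ hv₁ v₂ hv₂, hfUc]
  simp only [hβl, hβr, hβcl, hβcr]
  abel
end

section
/- Let G be a nilpotent group of class at most 2 ([G,G] ⊆ Z(G)), B a central subgroup with G/B abelian containing [G,G], L a divisible abelian group, β : G × G → L biadditive vanishing on B in each argument, H a subgroup with B ⊆ H ⊊ G, and f : H → L a map satisfying f(xy) = f(x)+f(y)+β(x,y) for x,y ∈ H, injective additive on B, and f([x,y]) = β(x,y)-β(y,x) for all x,y ∈ G (noting [x,y] ∈ B ⊆ H). Then for any g ∈ G \ H, f extends to a map on ⟨H, g⟩ satisfying the same three conditions. -/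
open scoped commutatorElement


/-- One-step extension theorem: `G` nilpotent of class ≤ 2, `B` a central subgroup
containing `[G,G]` (so `G/B` is abelian), `L` a divisible abelian group, `β : G × G → L`
biadditive vanishing on `B` in each argument, `H` a proper subgroup with `B ⊆ H`, and
`f : H → L` satisfying the functional equation on `H`, injective and additive on `B`,
and `f([x,y]) = β(x,y) - β(y,x)` for all `x, y ∈ G`. Then for `g ∈ G \ H`, the map `f`
extends to `⟨H, g⟩` with the same three properties. -/
theorem one_step_extension {G L : Type*} [Group G] [AddCommGroup L]
    (B : Subgroup G) (hBcentral : B ≤ Subgroup.center G)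
    (hcomm : ∀ x y : G, ⁅x, y⁆ ∈ B)
    (hdiv : ∀ n : ℕ, 0 < n → ∀ l : L, ∃ m : L, n • m = l)
    (β : G → G → L)
    (hβl : ∀ x x' y : G, β (x * x') y = β x y + β x' y)
    (hβr : ∀ x y y' : G, β x (y * y') = β x y + β x y')
    (hβB : ∀ b ∈ B, ∀ x : G, β b x = 0 ∧ β x b = 0)
    (H : Subgroup G) (hBH : B ≤ H) (hHproper : H ≠ ⊤)
    (f : G → L)
    (hf : ∀ x ∈ H, ∀ y ∈ H, f (x * y) = f x + f y + β x y)
    (hfinj : ∀ x ∈ B, ∀ y ∈ B, f x = f y → x = y)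
    (hfcomm : ∀ x y : G, f ⁅x, y⁆ = β x y - β y x)
    (g : G) (hg : g ∉ H) :
    ∃ f' : G → L,
      (∀ h ∈ H, f' h = f h) ∧
      (∀ x ∈ H ⊔ Subgroup.closure {g}, ∀ y ∈ H ⊔ Subgroup.closure {g},
        f' (x * y) = f' x + f' y + β x y) ∧
      (∀ x ∈ B, ∀ y ∈ B, f' x = f' y → x = y) ∧
      (∀ x y : G, f' ⁅x, y⁆ = β x y - β y x) := by
  classical
  -- basic bilinearity consequences
  have hβ1l : ∀ y : G, β 1 y = 0 := by
    intro y
    have h := hβl 1 1 y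
    rw [one_mul] at h
    exact right_eq_add.mp h
  have hβ1r : ∀ x : G, β x 1 = 0 := by
    intro x
    have h := hβr x 1 1
    rw [one_mul] at h
    exact right_eq_add.mp h
  have hβinvl : ∀ x y : G, β x⁻¹ y = - β x y := by
    intro x y
    have h := hβl x⁻¹ x y
    rw [inv_mul_cancel, hβ1l] at h
    exact eq_neg_of_add_eq_zero_left h.symm
  have hβinvr : ∀ x y : G, β x y⁻¹ = - β x y := by
    intro x y
    have h := hβr x y⁻¹ y
    rw [inv_mul_cancel, hβ1r] at h
    exact eq_neg_of_add_eq_zero_left h.symm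
  have hβzl : ∀ (n : ℤ) (x y : G), β (x ^ n) y = n • β x y := by
    intro n x y
    induction n using Int.induction_on with
    | zero => simpa using hβ1l y
    | succ k ih => rw [zpow_add_one, hβl, ih, add_smul, one_smul]
    | pred k ih => rw [zpow_sub_one, hβl, hβinvl, ih, sub_smul, one_smul, sub_eq_add_neg]
  have hβzr : ∀ (n : ℤ) (x y : G), β x (y ^ n) = n • β x y := by
    intro n x y
    induction n using Int.induction_on with
    | zero => simpa using hβ1r x
    | succ k ih => rw [zpow_add_one, hβr, ih, add_smul, one_smul]
    | pred k ih => rw [zpow_sub_one, hβr, hβinvr, ih, sub_smul, one_smul, sub_eq_add_neg]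
  -- a half of β g g
  obtain ⟨γ, hγ⟩ := hdiv 2 two_pos (β g g)
  have hγ2 : (2 : ℤ) • γ = β g g := by
    rw [two_zsmul, ← two_nsmul]; exact hγ
  have hγ' : ∀ a b : ℤ, β (g ^ a) (g ^ b) = (2 * a * b) • γ := by
    intro a b
    rw [hβzl, hβzr, smul_smul, ← hγ2, smul_smul]
    congr 1
    ring
  have f1 : f 1 = 0 := by
    have h := hf 1 H.one_mem 1 H.one_mem
    rw [one_mul, hβ1l, add_zero] at h
    exact right_eq_add.mp h
  -- additivity of f on powers of g lying in H
  have hFadd : ∀ a b : ℤ, g ^ a ∈ H → g ^ b ∈ H →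
      f (g ^ (a + b)) = f (g ^ a) + f (g ^ b) + (2 * a * b) • γ := by
    intro a b ha hb
    rw [zpow_add, hf _ ha _ hb, hγ']
  -- choice of the constant c
  have hc : ∃ c : L, ∀ d : ℤ, g ^ d ∈ H → f (g ^ d) = d • c + (d * (d - 1)) • γ := by
    set S : AddSubgroup ℤ :=
      { carrier := {d : ℤ | g ^ d ∈ H}
        zero_mem' := by simp [H.one_mem]
        add_mem' := by
          intro a b ha hb
          have ha' : g ^ a ∈ H := ha
          have hb' : g ^ b ∈ H := hb
          simpa [zpow_add] using mul_mem ha' hb'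
        neg_mem' := by
          intro a ha
          have ha' : g ^ a ∈ H := ha
          simpa [zpow_neg] using inv_mem ha' } with hSdef
    obtain ⟨k, hk⟩ := Int.subgroup_cyclic S
    have hmemS : ∀ d : ℤ, g ^ d ∈ H ↔ d ∈ S := by intro d; rfl
    have hmulmem : ∀ m : ℤ, g ^ (m * k) ∈ H := by
      intro m
      have : m * k ∈ S := by
        rw [hk]
        exact AddSubgroup.mem_closure_singleton.mpr ⟨m, by rw [smul_eq_mul]⟩
      exact this
    have hkS : g ^ k ∈ H := by simpa using hmulmem 1
    by_cases hk0 : k = 0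
    · refine ⟨0, ?_⟩
      intro d hd
      have hdS : d ∈ S := hd
      rw [hk, hk0] at hdS
      have hd0 : d = 0 := by
        obtain ⟨n, hn⟩ := AddSubgroup.mem_closure_singleton.mp hdS
        simpa using hn.symm
      subst hd0
      simpa using f1
    · have hcex : ∃ c : L, k • c = f (g ^ k) - (k * (k - 1)) • γ := by
        rcases lt_or_gt_of_ne hk0 with hneg | hpos
        · obtain ⟨m, hm⟩ := hdiv (-k).toNat (by omega) (-(f (g ^ k) - (k * (k - 1)) • γ))
          refine ⟨m, ?_⟩
          have h1 : ((-k).toNat : ℤ) = -k := Int.toNat_of_nonneg (by omega)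
          have h2 : ((-k).toNat : ℤ) • m = (-k).toNat • m := natCast_zsmul m _
          rw [h1] at h2
          have : (-k) • m = -(f (g ^ k) - (k * (k - 1)) • γ) := by rw [h2, hm]
          rw [neg_smul] at this
          have := neg_eq_iff_eq_neg.mp this
          rw [neg_neg] at this
          exact this
        · obtain ⟨m, hm⟩ := hdiv k.toNat (by omega) (f (g ^ k) - (k * (k - 1)) • γ)
          refine ⟨m, ?_⟩
          have h1 : (k.toNat : ℤ) = k := Int.toNat_of_nonneg (by omega)
          have h2 : ((k.toNat : ℤ)) • m = k.toNat • m := natCast_zsmul m _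
          rw [h1] at h2
          rw [h2, hm]
      obtain ⟨c, hcdef⟩ := hcex
      have hfgk : f (g ^ k) = k • c + (k * (k - 1)) • γ := by
        rw [hcdef]; abel
      have key : ∀ m : ℤ, f (g ^ (m * k)) = (m * k) • c + ((m * k) * (m * k - 1)) • γ := by
        have hfgnk : f (g ^ (-k)) = (-k) • c + ((-k) * ((-k) - 1)) • γ := by
          have h0 := hFadd k (-k) hkS (by simpa [zpow_neg] using inv_mem hkS)
          rw [add_neg_cancel, zpow_zero, f1, hfgk] at h0
          have h3 : f (g ^ (-k)) =
              0 - (k • c + (k * (k - 1)) • γ) - (2 * k * (-k)) • γ := by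
            rw [h0]; abel
          rw [h3]; module
        intro m
        induction m using Int.induction_on with
        | zero => simpa using f1
        | succ i ih =>
          have h0 := hFadd (i * k) k (hmulmem i) hkS
          have e : ((i : ℤ) + 1) * k = i * k + k := by ring
          rw [e, h0, ih, hfgk]
          module
        | pred i ih =>
          have h0 := hFadd ((-i) * k) (-k) (hmulmem (-i)) (by simpa [zpow_neg] using inv_mem hkS)
          have e : ((-i : ℤ) - 1) * k = (-i) * k + (-k) := by ring
          rw [e, h0, ih, hfgnk]
          module
      refine ⟨c, ?_⟩
      intro d hd
      have hdS : d ∈ S := hd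
      rw [hk] at hdS
      obtain ⟨m, hm⟩ := AddSubgroup.mem_closure_singleton.mp hdS
      rw [smul_eq_mul] at hm
      rw [← hm]
      exact key m
  obtain ⟨c, hc'⟩ := hc
  -- membership lemma for the generated subgroup
  have hK : ∀ x ∈ H ⊔ Subgroup.closure {g}, ∃ n : ℤ, x * g ^ (-n) ∈ H := by
    set K' : Subgroup G :=
      { carrier := {x : G | ∃ n : ℤ, x * g ^ (-n) ∈ H}
        one_mem' := ⟨0, by simpa using H.one_mem⟩
        mul_mem' := by
          rintro a b ⟨n, hn⟩ ⟨m, hm⟩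
          refine ⟨n + m, ?_⟩
          have hE : a * b * g ^ (-(n + m)) =
              (a * g ^ (-n)) * (⁅g ^ n, b⁆ * (b * g ^ (-m))) := by
            rw [commutatorElement_def]; group
          rw [hE]
          exact mul_mem hn (mul_mem (hBH (hcomm _ _)) hm)
        inv_mem' := by
          rintro a ⟨n, hn⟩
          refine ⟨-n, ?_⟩
          have hE : a⁻¹ * g ^ (-(-n)) = ⁅a⁻¹, g ^ n⁆ * (a * g ^ (-n))⁻¹ := by
            rw [commutatorElement_def]; group
          rw [hE]
          exact mul_mem (hBH (hcomm _ _)) (inv_mem hn) } with hKdef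
    have hle : H ⊔ Subgroup.closure {g} ≤ K' := by
      refine sup_le ?_ ?_
      · intro h hh
        exact ⟨0, by simpa using hh⟩
      · rw [Subgroup.closure_le]
        intro a ha
        rcases ha with rfl
        refine ⟨1, ?_⟩
        have : a * a ^ (-(1 : ℤ)) = 1 := by group
        rw [this]
        exact H.one_mem
    intro x hx
    exact hle hx
  -- invariance of the defining formula
  have hinv : ∀ (x : G) (n m : ℤ), x * g ^ (-n) ∈ H → x * g ^ (-m) ∈ H →
      f (x * g ^ (-m)) + m • c + (m * (m - 1)) • γ + β (x * g ^ (-m)) (g ^ m)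
        = f (x * g ^ (-n)) + n • c + (n * (n - 1)) • γ + β (x * g ^ (-n)) (g ^ n) := by
    intro x n m hn hm
    have hd : g ^ (n - m) ∈ H := by
      have h := mul_mem (inv_mem hn) hm
      have e : (x * g ^ (-n))⁻¹ * (x * g ^ (-m)) = g ^ (n - m) := by group
      rwa [e] at h
    have e1 : x * g ^ (-m) = (x * g ^ (-n)) * g ^ (n - m) := by group
    rw [e1, hf _ hn _ hd, hc' _ hd,
      hβl (x * g ^ (-n)) (g ^ (n - m)) (g ^ m), hγ' (n - m) m]
    have e3 : β (x * g ^ (-n)) (g ^ n)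
        = β (x * g ^ (-n)) (g ^ (n - m)) + β (x * g ^ (-n)) (g ^ m) := by
      rw [← hβr, ← zpow_add]
      congr 2
      ring
    rw [e3]
    module
  -- the extension
  obtain ⟨f', hspec⟩ : ∃ f' : G → L, ∀ (x : G) (n : ℤ), x * g ^ (-n) ∈ H →
      f' x = f (x * g ^ (-n)) + n • c + (n * (n - 1)) • γ + β (x * g ^ (-n)) (g ^ n) := by
    refine ⟨fun x => if hx : ∃ n : ℤ, x * g ^ (-n) ∈ H then
      f (x * g ^ (-hx.choose)) + hx.choose • c + (hx.choose * (hx.choose - 1)) • γ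
        + β (x * g ^ (-hx.choose)) (g ^ hx.choose) else 0, ?_⟩
    intro x n hn
    have hx : ∃ k : ℤ, x * g ^ (-k) ∈ H := ⟨n, hn⟩
    simp only [dif_pos hx]
    exact hinv x n hx.choose hn hx.choose_spec
  have hfH : ∀ h ∈ H, f' h = f h := by
    intro h hh
    have h0 : h * g ^ (-(0 : ℤ)) ∈ H := by simpa using hh
    rw [hspec h 0 h0]
    simp [hβ1r]
  refine ⟨f', hfH, ?_, ?_, ?_⟩
  · -- functional equation on ⟨H, g⟩
    intro x hx y hy
    obtain ⟨n, hn⟩ := hK x hx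
    obtain ⟨m, hm⟩ := hK y hy
    have hz : ⁅g ^ n, y⁆ ∈ B := hcomm _ _
    have hzH : ⁅g ^ n, y⁆ ∈ H := hBH hz
    have hE : (x * y) * g ^ (-(n + m)) =
        (x * g ^ (-n)) * (⁅g ^ n, y⁆ * (y * g ^ (-m))) := by
      rw [commutatorElement_def]; group
    have hwH : (x * y) * g ^ (-(n + m)) ∈ H := by
      rw [hE]; exact mul_mem hn (mul_mem hzH hm)
    rw [hspec _ _ hwH, hspec x n hn, hspec y m hm, hE]
    rw [hf _ hn _ (mul_mem hzH hm), hf _ hzH _ hm, hfcomm (g ^ n) y]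
    rw [hβr (x * g ^ (-n)) (⁅g ^ n, y⁆) (y * g ^ (-m))]
    rw [(hβB _ hz (y * g ^ (-m))).1, (hβB _ hz (x * g ^ (-n))).2]
    rw [hβl (x * g ^ (-n)) (⁅g ^ n, y⁆ * (y * g ^ (-m))) (g ^ (n + m))]
    rw [hβl (⁅g ^ n, y⁆) (y * g ^ (-m)) (g ^ (n + m))]
    rw [(hβB _ hz (g ^ (n + m))).1]
    rw [zpow_add g n m]
    rw [hβr (x * g ^ (-n)) (g ^ n) (g ^ m), hβr (y * g ^ (-m)) (g ^ n) (g ^ m)]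
    have eβgy : β (g ^ n) y = β (g ^ n) (y * g ^ (-m)) + (2 * n * m) • γ := by
      conv_lhs => rw [show y = (y * g ^ (-m)) * g ^ m by group]
      rw [hβr (g ^ n) (y * g ^ (-m)) (g ^ m), hγ' n m]
    have eβyg : β y (g ^ n) = β (y * g ^ (-m)) (g ^ n) + (2 * m * n) • γ := by
      conv_lhs => rw [show y = (y * g ^ (-m)) * g ^ m by group]
      rw [hβl (y * g ^ (-m)) (g ^ m) (g ^ n), hγ' m n]
    have eβxy : β x y = β (x * g ^ (-n)) (y * g ^ (-m)) + β (x * g ^ (-n)) (g ^ m)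
        + β (g ^ n) (y * g ^ (-m)) + (2 * n * m) • γ := by
      conv_lhs => rw [show x = (x * g ^ (-n)) * g ^ n by group,
        show y = (y * g ^ (-m)) * g ^ m by group]
      rw [hβl (x * g ^ (-n)) (g ^ n) ((y * g ^ (-m)) * g ^ m),
        hβr (x * g ^ (-n)) (y * g ^ (-m)) (g ^ m),
        hβr (g ^ n) (y * g ^ (-m)) (g ^ m), hγ' n m]
      abel
    rw [eβgy, eβyg, eβxy]
    module
  · intro a ha b hb hab
    rw [hfH a (hBH ha), hfH b (hBH hb)] at hab
    exact hfinj a ha b hb hab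
  · intro a b
    rw [hfH _ (hBH (hcomm a b))]
    exact hfcomm a b
end

section
/- Every nilpotent group G of class at most 2 embeds into a central extension of abelian groups whose associated cocycle is bilinear; specifically, G embeds into a twisted product G^{ab} ×_β L for some abelian group L and bilinear β : G^{ab} × G^{ab} → L, compatibly with the projection G → G^{ab}. -/
/-- The twisted product of abelian groups `A` and `B` along a bilinear map `δ`. -/
def twGroup {A B : Type*} [AddCommGroup A] [AddCommGroup B] (δ : A →+ A →+ B) :
    Group (A × B) where
  mul p q := (p.1 + q.1, p.2 + q.2 + δ p.1 q.1)
  one := (0, 0)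
  inv p := (-p.1, -p.2 + δ p.1 p.1)
  mul_assoc a b c := by
    refine Prod.ext ?_ ?_
    · show a.1 + b.1 + c.1 = a.1 + (b.1 + c.1); abel
    · show a.2 + b.2 + δ a.1 b.1 + c.2 + δ (a.1 + b.1) c.1
        = a.2 + (b.2 + c.2 + δ b.1 c.1) + δ a.1 (b.1 + c.1)
      simp [map_add]; abel
  one_mul a := by
    refine Prod.ext ?_ ?_
    · show 0 + a.1 = a.1; simp
    · show 0 + a.2 + δ 0 a.1 = a.2; simp
  mul_one a := by
    refine Prod.ext ?_ ?_
    · show a.1 + 0 = a.1; simp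
    · show a.2 + 0 + δ a.1 0 = a.2; simp
  inv_mul_cancel a := by
    refine Prod.ext ?_ ?_
    · show -a.1 + a.1 = 0; simp
    · show -a.2 + δ a.1 a.1 + a.2 + δ (-a.1) a.1 = 0
      simp [map_neg]


universe u

open scoped commutatorElement

noncomputable section TwistedHelpers


noncomputable section TwistedHelpers

/-- The circle group `ℝ/ℤ`. -/
abbrev TwRC : Type := AddCircle (1 : ℝ)

/-- Extension of additive homs into `ℝ/ℤ` along injections. -/
lemma twExt {M N : Type*} [AddCommGroup M] [AddCommGroup N] (f : M →+ N)
    (hf : Function.Injective f) (g : M →+ TwRC) :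
    ∃ h : N →+ TwRC, ∀ m, h (f m) = g m := by
  obtain ⟨h, hh⟩ := (Module.Baer.of_divisible TwRC).extension_property_addMonoidHom f hf g
  exact ⟨h, fun m => by rw [← hh]; rfl⟩

/-- Characters into `ℝ/ℤ` separate points. -/
lemma twChar {N : Type*} [AddCommGroup N] {x : N} (hx : x ≠ 0) :
    ∃ χ : N →+ TwRC, χ x ≠ 0 := by
  classical
  set o : ℕ := addOrderOf x with ho
  have ho1 : o ≠ 1 := fun h1 =>
    hx (by rwa [ho, AddMonoid.addOrderOf_eq_one_iff] at h1)
  set tr : ℝ := if o = 0 then (1/2 : ℝ) else ((o : ℝ)⁻¹) with htr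
  set t : TwRC := ((tr : ℝ) : TwRC) with htdef
  have ht0 : t ≠ 0 := by
    intro h
    obtain ⟨n, hn⟩ := (AddCircle.coe_eq_zero_iff (1:ℝ)).mp h
    rw [zsmul_eq_mul, mul_one] at hn
    by_cases hoz : o = 0
    · rw [htr, if_pos hoz] at hn
      have : (2 * n : ℤ) = 1 := by
        have : (2 * n : ℝ) = 1 := by linarith [hn]
        exact_mod_cast this
      omega
    · rw [htr, if_neg hoz] at hn
      have hone : (n * o : ℝ) = 1 := by
        have hop : (o : ℝ) ≠ 0 := Nat.cast_ne_zero.mpr hoz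
        field_simp at hn
        linarith [hn]
      have hone' : (n * o : ℤ) = 1 := by exact_mod_cast hone
      have hdvd : (o : ℤ) ∣ 1 := by rw [← hone']; exact dvd_mul_left _ _
      have := Int.le_of_dvd one_pos hdvd
      have : (2 : ℤ) ≤ o := by exact_mod_cast Nat.two_le_iff o |>.mpr ⟨hoz, ho1⟩
      omega
  have hkill : ∀ k : ℤ, k • x = 0 → k • t = 0 := by
    intro k hk
    have hdvd : (o : ℤ) ∣ k := by
      rw [ho]; exact addOrderOf_dvd_iff_zsmul_eq_zero.mpr hk
    by_cases hoz : o = 0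
    · have : k = 0 := by rw [hoz] at hdvd; exact_mod_cast zero_dvd_iff.mp (by exact_mod_cast hdvd)
      simp [this]
    · obtain ⟨j, hj⟩ := hdvd
      have hot : (o : ℤ) • t = 0 := by
        rw [htdef, htr, if_neg hoz, ← QuotientAddGroup.mk_zsmul]
        have : ((o:ℤ) • (o:ℝ)⁻¹ : ℝ) = 1 := by
          rw [zsmul_eq_mul]
          field_simp
          norm_cast
        rw [this]
        exact AddCircle.coe_period 1
      rw [hj, mul_comm, mul_zsmul, hot, smul_zero]
  -- the cyclic subgroup generated by x
  set S : AddSubgroup N := AddSubgroup.zmultiples x with hS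
  let m : ℤ →+ ↥S := AddMonoidHom.mk'
    (fun k => ⟨k • x, AddSubgroup.mem_zmultiples_iff.mpr ⟨k, rfl⟩⟩)
    (fun k l => by ext; simp [add_zsmul])
  have hmsurj : Function.Surjective m := by
    rintro ⟨y, hy⟩
    obtain ⟨k, hk⟩ := AddSubgroup.mem_zmultiples_iff.mp hy
    exact ⟨k, Subtype.ext hk⟩
  let ψ : ℤ →+ TwRC := (zmultiplesHom TwRC) t
  have hψkill : ∀ k ∈ m.ker, ψ k = 0 := by
    intro k hk
    have : k • x = 0 := congrArg Subtype.val hk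
    exact hkill k this
  let e := QuotientAddGroup.quotientKerEquivOfSurjective m hmsurj
  let χ₀ : ↥S →+ TwRC :=
    (QuotientAddGroup.lift m.ker ψ hψkill).comp e.symm.toAddMonoidHom
  have hmem : x ∈ S := AddSubgroup.mem_zmultiples_iff.mpr ⟨1, one_zsmul x⟩
  have hχ₀x : χ₀ ⟨x, hmem⟩ = t := by
    have h1 : e ((1 : ℤ) : ℤ ⧸ m.ker) = ⟨x, hmem⟩ := by
      have : m 1 = ⟨x, hmem⟩ := Subtype.ext (one_zsmul x)
      exact this
    have h2 : e.symm ⟨x, hmem⟩ = ((1 : ℤ) : ℤ ⧸ m.ker) := by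
      rw [← h1, AddEquiv.symm_apply_apply]
    show (QuotientAddGroup.lift m.ker ψ hψkill) (e.symm ⟨x, hmem⟩) = t
    rw [h2]
    show ψ 1 = t
    simp [ψ]
  obtain ⟨χ, hχ⟩ := twExt S.subtype Subtype.val_injective χ₀
  refine ⟨χ, ?_⟩
  have : χ x = t := by
    have h5 := hχ ⟨x, hmem⟩
    rw [hχ₀x] at h5
    simpa using h5
  rw [this]; exact ht0


/-- Biadditivity of a two-variable map. -/
def TwBiadd {A B : Type*} [AddCommGroup A] [AddCommGroup B] (f : A → A → B) : Prop :=
  (∀ a a' b, f (a + a') b = f a b + f a' b) ∧ (∀ a b b', f a (b + b') = f a b + f a b')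

/-- `A` is good if every alternating biadditive form into `ℝ/ℤ` is the
antisymmetrization of a biadditive form. -/
def TwGood (A : Type*) [AddCommGroup A] : Prop :=
  ∀ lam : A → A → TwRC, TwBiadd lam → (∀ a, lam a a = 0) →
    ∃ β : A → A → TwRC, TwBiadd β ∧ ∀ a b, β a b - β b a = lam a b

section basic

variable {A B : Type*} [AddCommGroup A] [AddCommGroup B]

/-- Bundle a biadditive map. -/
def TwBiadd.hom {f : A → A → B} (hf : TwBiadd f) : A →+ A →+ B :=
  AddMonoidHom.mk' (fun a => AddMonoidHom.mk' (f a) (fun b b' => hf.2 a b b'))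
    (fun a a' => AddMonoidHom.ext fun b => hf.1 a a' b)

@[simp] lemma TwBiadd.hom_apply {f : A → A → B} (hf : TwBiadd f) (a b : A) :
    hf.hom a b = f a b := rfl

lemma TwBiadd.zsmul_left {f : A → A → B} (hf : TwBiadd f) (k : ℤ) (a b : A) :
    f (k • a) b = k • f a b := by
  have := map_zsmul hf.hom k a
  calc f (k • a) b = hf.hom (k • a) b := rfl
    _ = (k • hf.hom a) b := by rw [this]
    _ = k • f a b := rfl

lemma TwBiadd.zsmul_right {f : A → A → B} (hf : TwBiadd f) (k : ℤ) (a b : A) :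
    f a (k • b) = k • f a b :=
  map_zsmul (hf.hom a) k b

lemma TwBiadd.antisymm {f : A → A → B} (hf : TwBiadd f) (hd : ∀ a, f a a = 0)
    (a b : A) : f a b + f b a = 0 := by
  have h := hd (a + b)
  rw [hf.1 a b (a+b), hf.2 a a b, hf.2 b a b, hd a, hd b] at h
  rw [← h]; abel

lemma TwGood.of_equiv {e : A ≃+ B} (h : TwGood A) : TwGood B := by
  intro lam hb hd
  obtain ⟨β, hβ, hanti⟩ := h (fun x y => lam (e x) (e y))
    ⟨fun a a' b => by show lam (e (a + a')) (e b) = _; rw [map_add, hb.1],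
     fun a b b' => by show lam (e a) (e (b + b')) = _; rw [map_add, hb.2]⟩
    (fun a => hd _)
  refine ⟨fun x y => β (e.symm x) (e.symm y),
    ⟨fun a a' b => by show β (e.symm (a + a')) (e.symm b) = _; rw [map_add, hβ.1],
     fun a b b' => by show β (e.symm a) (e.symm (b + b')) = _; rw [map_add, hβ.2]⟩,
    fun a b => by simpa using hanti (e.symm a) (e.symm b)⟩

end basic

section pi

variable {ι : Type*} [Fintype ι] (C : ι → Type*) [∀ i, AddCommGroup (C i)]

lemma twGood_pi (hcyc : ∀ i, ∃ g : C i, ∀ x : C i, ∃ k : ℤ, k • g = x) :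
    TwGood (∀ i, C i) := by
  classical
  intro lam hb hd
  set σ : ι → Fin (Fintype.card ι) := ⇑(Fintype.equivFin ι) with hσ
  have hσinj : Function.Injective σ := (Fintype.equivFin ι).injective
  set T : (∀ i, C i) → (∀ i, C i) → ι × ι → TwRC := fun f g p =>
    lam (Pi.single p.1 (f p.1)) (Pi.single p.2 (g p.2)) with hT
  set β : (∀ i, C i) → (∀ i, C i) → TwRC := fun f g =>
    ∑ p : ι × ι, if σ p.1 < σ p.2 then T f g p else 0 with hβ
  have hdiag : ∀ (f g : ∀ i, C i) (i : ι), T f g (i, i) = 0 := by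
    intro f g i
    obtain ⟨gen, hgen⟩ := hcyc i
    obtain ⟨k, hk⟩ := hgen (f i)
    obtain ⟨l, hl⟩ := hgen (g i)
    have hsingle : ∀ (k : ℤ) (x : C i), Pi.single i (k • x) = k • Pi.single i x := by
      intro k x
      funext j
      by_cases hj : j = i
      · subst hj; simp
      · simp [Pi.single_apply, hj]
    show lam (Pi.single i (f i)) (Pi.single i (g i)) = 0
    rw [← hk, ← hl, hsingle, hsingle, hb.zsmul_left, hb.zsmul_right, hd, smul_zero, smul_zero]
  refine ⟨β, ⟨?_, ?_⟩, ?_⟩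
  · intro f f' g
    rw [hβ, ← Finset.sum_add_distrib]
    refine Finset.sum_congr rfl fun p _ => ?_
    by_cases hp : σ p.1 < σ p.2
    · rw [if_pos hp, if_pos hp, if_pos hp, hT]
      show lam (Pi.single p.1 ((f + f') p.1)) _ = _
      rw [Pi.add_apply, Pi.single_add, hb.1]
    · rw [if_neg hp, if_neg hp, if_neg hp, add_zero]
  · intro f g g'
    rw [hβ, ← Finset.sum_add_distrib]
    refine Finset.sum_congr rfl fun p _ => ?_
    by_cases hp : σ p.1 < σ p.2
    · rw [if_pos hp, if_pos hp, if_pos hp, hT]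
      show lam _ (Pi.single p.2 ((g + g') p.2)) = _
      rw [Pi.add_apply, Pi.single_add, hb.2]
    · rw [if_neg hp, if_neg hp, if_neg hp, add_zero]
  · intro f g
    have hneg : ∀ p : ι × ι, -(T g f p.swap) = T f g p := by
      intro p
      have := hb.antisymm hd (Pi.single p.1 (f p.1)) (Pi.single p.2 (g p.2))
      rw [hT]
      show -(lam (Pi.single p.2 (g p.2)) (Pi.single p.1 (f p.1))) = _
      rw [neg_eq_iff_add_eq_zero, add_comm]
      exact this
    have hswap : β g f = ∑ p : ι × ι, if σ p.2 < σ p.1 then T g f p.swap else 0 := by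
      rw [hβ]
      exact Fintype.sum_equiv (Equiv.prodComm ι ι) _ _ (fun p => rfl)
    have : β f g - β g f
        = ∑ p : ι × ι, ((if σ p.1 < σ p.2 then T f g p else 0)
            + (if σ p.2 < σ p.1 then T f g p else 0)) := by
      rw [hswap]
      show (∑ p : ι × ι, if σ p.1 < σ p.2 then T f g p else 0)
          - (∑ p : ι × ι, if σ p.2 < σ p.1 then T g f p.swap else 0) = _
      rw [sub_eq_add_neg, ← Finset.sum_neg_distrib, ← Finset.sum_add_distrib]
      refine Finset.sum_congr rfl fun p _ => ?_
      congr 1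
      by_cases hp : σ p.2 < σ p.1
      · rw [if_pos hp, if_pos hp, hneg]
      · rw [if_neg hp, if_neg hp, neg_zero]
    rw [this]
    have hterm : ∀ p : ι × ι,
        ((if σ p.1 < σ p.2 then T f g p else 0) + (if σ p.2 < σ p.1 then T f g p else 0))
          = T f g p := by
      intro p
      by_cases hpq : p.1 = p.2
      · have h1 : ¬ σ p.1 < σ p.2 := by rw [hpq]; exact lt_irrefl _
        have h2 : ¬ σ p.2 < σ p.1 := by rw [hpq]; exact lt_irrefl _
        rw [if_neg h1, if_neg h2, add_zero]
        have : T f g p = 0 := by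
          have := hdiag f g p.1
          rw [hT] at this ⊢
          rw [show p = (p.1, p.2) from rfl] at *
          simp only at *
          rw [hpq] at this ⊢
          exact this
        rw [this]
      · have : σ p.1 ≠ σ p.2 := fun h => hpq (hσinj h)
        rcases this.lt_or_gt with h | h
        · rw [if_pos h, if_neg (asymm h), add_zero]
        · rw [if_neg (asymm h), if_pos h, zero_add]
    rw [Finset.sum_congr rfl (fun p _ => hterm p)]
    -- now ∑ p, T f g p = lam f g
    rw [show Finset.univ (α := ι × ι) = Finset.univ ×ˢ Finset.univ from rfl,
      Finset.sum_product]
    have hinner : ∀ i : ι, ∑ j : ι, T f g (i, j) = lam (Pi.single i (f i)) g := by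
      intro i
      have h2 := map_sum (hb.hom (Pi.single i (f i))) (fun j => Pi.single j (g j)) Finset.univ
      rw [Finset.univ_sum_single] at h2
      exact h2.symm
    rw [Finset.sum_congr rfl (fun i _ => hinner i)]
    have h3 := map_sum ((hb.hom).flip g) (fun i => Pi.single i (f i)) Finset.univ
    rw [Finset.univ_sum_single] at h3
    exact h3.symm

end pi

section prodfg

lemma twGood_prod {A B : Type*} [AddCommGroup A] [AddCommGroup B]
    (hA : TwGood A) (hB : TwGood B) : TwGood (A × B) := by
  intro lam hb hd
  have hsplit : ∀ x : A × B, x = (x.1, 0) + (0, x.2) := by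
    intro x; ext <;> simp
  obtain ⟨βA, hβA, hantiA⟩ := hA (fun x y => lam (x, 0) (y, 0))
    ⟨fun a a' b => by
        show lam (a + a', 0) (b, 0) = _
        rw [show ((a + a', 0) : A × B) = (a, 0) + (a', 0) by ext <;> simp, hb.1],
      fun a b b' => by
        show lam (a, 0) (b + b', 0) = _
        rw [show ((b + b', 0) : A × B) = (b, 0) + (b', 0) by ext <;> simp, hb.2]⟩
    (fun a => hd _)
  obtain ⟨βB, hβB, hantiB⟩ := hB (fun x y => lam (0, x) (0, y))
    ⟨fun a a' b => by
        show lam (0, a + a') (0, b) = _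
        rw [show ((0, a + a') : A × B) = (0, a) + (0, a') by ext <;> simp, hb.1],
      fun a b b' => by
        show lam (0, a) (0, b + b') = _
        rw [show ((0, b + b') : A × B) = (0, b) + (0, b') by ext <;> simp, hb.2]⟩
    (fun a => hd _)
  refine ⟨fun p q => βA p.1 q.1 + βB p.2 q.2 + lam (p.1, 0) (0, q.2), ⟨?_, ?_⟩, ?_⟩
  · intro p p' q
    show βA (p.1 + p'.1) q.1 + βB (p.2 + p'.2) q.2 + lam (p.1 + p'.1, 0) (0, q.2) = _
    rw [hβA.1, hβB.1, show ((p.1 + p'.1, 0) : A × B) = (p.1, 0) + (p'.1, 0) by ext <;> simp,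
      hb.1]
    beta_reduce
    abel
  · intro p q q'
    show βA p.1 (q.1 + q'.1) + βB p.2 (q.2 + q'.2) + lam (p.1, 0) (0, q.2 + q'.2) = _
    rw [hβA.2, hβB.2, show ((0, q.2 + q'.2) : A × B) = (0, q.2) + (0, q'.2) by ext <;> simp,
      hb.2]
    beta_reduce
    abel
  · intro p q
    have hdecomp : lam p q = lam (p.1, 0) (q.1, 0) + lam (p.1, 0) (0, q.2)
        + lam (0, p.2) (q.1, 0) + lam (0, p.2) (0, q.2) := by
      conv_lhs => rw [hsplit p, hsplit q]
      rw [hb.1, hb.2, hb.2]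
      abel
    have e4 : lam (0, p.2) (q.1, 0) = -(lam (q.1, 0) (0, p.2)) :=
      eq_neg_of_add_eq_zero_left (hb.antisymm hd (0, p.2) (q.1, 0))
    have e1 := hantiA p.1 q.1
    have e2 := hantiB p.2 q.2
    show βA p.1 q.1 + βB p.2 q.2 + lam (p.1, 0) (0, q.2)
        - (βA q.1 p.1 + βB q.2 p.2 + lam (q.1, 0) (0, p.2)) = lam p q
    rw [hdecomp, e4, ← e1, ← e2]
    abel

lemma twGood_fg (B : Type*) [AddCommGroup B] [hfg : AddGroup.FG B] : TwGood B := by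
  obtain ⟨n, ι, fι, p, hp, e, ⟨eq⟩⟩ := AddCommGroup.equiv_free_prod_directSum_zmod B
  have hfree : TwGood (Fin n →₀ ℤ) := by
    have hpi : TwGood (Fin n → ℤ) :=
      twGood_pi _ (fun i => ⟨1, fun x => ⟨x, by simp⟩⟩)
    exact TwGood.of_equiv (e := Finsupp.addEquivFunOnFinite.symm) hpi
  have htors : TwGood (DirectSum ι fun i => ZMod (p i ^ e i)) := by
    have hpi : TwGood (∀ i : ι, ZMod (p i ^ e i)) := by
      refine twGood_pi _ (fun i => ⟨1, fun x => ⟨(ZMod.cast x : ℤ), ?_⟩⟩)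
      rw [zsmul_eq_mul, mul_one, ZMod.intCast_zmod_cast]
    exact TwGood.of_equiv (e := (DirectSum.addEquivProd _).symm) hpi
  exact TwGood.of_equiv (e := eq.symm) (twGood_prod hfree htors)

end prodfg

section compact

lemma twGood_all (A : Type*) [AddCommGroup A] : TwGood A := by
  classical
  intro lam hb hd
  -- family of closed conditions on candidate maps
  let Ω := A → A → TwRC
  let Z : (A × A × A) ⊕ (A × A × A) ⊕ (A × A) → Set Ω := fun i =>
    match i with
    | .inl (a, a', b) => {β | β (a + a') b = β a b + β a' b}
    | .inr (.inl (a, b, b')) => {β | β a (b + b') = β a b + β a b'}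
    | .inr (.inr (a, b)) => {β | β a b - β b a = lam a b}
  have hev : ∀ x y : A, Continuous fun β : Ω => β x y := fun x y =>
    (continuous_apply y).comp (continuous_apply x)
  have hZc : ∀ i, IsClosed (Z i) := by
    rintro (⟨a, a', b⟩ | ⟨a, b, b'⟩ | ⟨a, b⟩)
    · exact isClosed_eq (hev _ _) ((hev _ _).add (hev _ _))
    · exact isClosed_eq (hev _ _) ((hev _ _).add (hev _ _))
    · exact isClosed_eq ((hev _ _).sub (hev _ _)) continuous_const
  have hne : (⋂ i, Z i).Nonempty := by
    by_contra hemp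
    rw [Set.not_nonempty_iff_eq_empty] at hemp
    obtain ⟨u, hu⟩ := IsCompact.elim_finite_subfamily_closed isCompact_univ Z hZc
      (by rw [Set.univ_inter]; exact hemp)
    -- collect the elements mentioned by the conditions in `u`
    let elts : (A × A × A) ⊕ (A × A × A) ⊕ (A × A) → Finset A := fun i =>
      match i with
      | .inl (a, a', b) => {a, a', b}
      | .inr (.inl (a, b, b')) => {a, b, b'}
      | .inr (.inr (a, b)) => {a, b}
    let S : Finset A := u.biUnion elts
    let B : AddSubgroup A := AddSubgroup.closure (S : Set A)
    have hmem : ∀ i ∈ u, ∀ x ∈ elts i, x ∈ B := fun i hi x hx =>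
      AddSubgroup.subset_closure (Finset.mem_biUnion.mpr ⟨i, hi, hx⟩)
    haveI hfgB : AddGroup.FG ↥B := by
      have : B.FG := ⟨S, rfl⟩
      exact (AddGroup.fg_iff_addSubgroup_fg B).mpr this
    have hgood := twGood_fg ↥B (fun x y => lam x y)
      ⟨fun a a' b => by
          show lam (↑(a + a')) b = _
          rw [AddSubgroup.coe_add, hb.1],
        fun a b b' => by
          show lam (a : A) ↑(b + b') = _
          rw [AddSubgroup.coe_add, hb.2]⟩
      (fun a => hd _)
    obtain ⟨βB, hβB, hanti⟩ := hgood
    let β₀ : Ω := fun x y =>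
      if h : x ∈ B ∧ y ∈ B then βB ⟨x, h.1⟩ ⟨y, h.2⟩ else 0
    have hβ₀ : ∀ (x y : A) (hx : x ∈ B) (hy : y ∈ B), β₀ x y = βB ⟨x, hx⟩ ⟨y, hy⟩ :=
      fun x y hx hy => dif_pos ⟨hx, hy⟩
    have hβ₀mem : β₀ ∈ Set.univ ∩ ⋂ i ∈ u, Z i := by
      refine ⟨trivial, ?_⟩
      rw [Set.mem_iInter₂]
      rintro (⟨a, a', b⟩ | ⟨a, b, b'⟩ | ⟨a, b⟩) hi
      · have ha : a ∈ B := hmem _ hi a (by simp [elts])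
        have ha' : a' ∈ B := hmem _ hi a' (by simp [elts])
        have hbb : b ∈ B := hmem _ hi b (by simp [elts])
        show β₀ (a + a') b = β₀ a b + β₀ a' b
        rw [hβ₀ a b ha hbb, hβ₀ a' b ha' hbb, hβ₀ (a + a') b (add_mem ha ha') hbb]
        have : (⟨a + a', add_mem ha ha'⟩ : ↥B) = ⟨a, ha⟩ + ⟨a', ha'⟩ := rfl
        rw [this, hβB.1]
      · have ha : a ∈ B := hmem _ hi a (by simp [elts])
        have hbb : b ∈ B := hmem _ hi b (by simp [elts])
        have hb' : b' ∈ B := hmem _ hi b' (by simp [elts])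
        show β₀ a (b + b') = β₀ a b + β₀ a b'
        rw [hβ₀ a b ha hbb, hβ₀ a b' ha hb', hβ₀ a (b + b') ha (add_mem hbb hb')]
        have : (⟨b + b', add_mem hbb hb'⟩ : ↥B) = ⟨b, hbb⟩ + ⟨b', hb'⟩ := rfl
        rw [this, hβB.2]
      · have ha : a ∈ B := hmem _ hi a (by simp [elts])
        have hbb : b ∈ B := hmem _ hi b (by simp [elts])
        show β₀ a b - β₀ b a = lam a b
        rw [hβ₀ a b ha hbb, hβ₀ b a hbb ha]
        exact hanti ⟨a, ha⟩ ⟨b, hbb⟩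
    rw [hu] at hβ₀mem
    exact hβ₀mem
  obtain ⟨β, hβ⟩ := hne
  rw [Set.mem_iInter] at hβ
  refine ⟨β, ⟨fun a a' b => hβ (.inl (a, a', b)), fun a b b' => hβ (.inr (.inl (a, b, b')))⟩,
    fun a b => hβ (.inr (.inr (a, b)))⟩

end compact


/-- Auxiliary carrier for the abelian extension attached to a symmetric cocycle. -/
@[ext] structure TwE {A : Type*} [AddCommGroup A] (d : A → A → TwRC) : Type _ where
  u : TwRC
  a : A

variable {A : Type*} [AddCommGroup A]

instance {d : A → A → TwRC} : Add (TwE d) :=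
  ⟨fun p q => ⟨p.u + q.u + d p.a q.a, p.a + q.a⟩⟩
instance {d : A → A → TwRC} : Zero (TwE d) := ⟨⟨0, 0⟩⟩
instance {d : A → A → TwRC} : Neg (TwE d) :=
  ⟨fun p => ⟨-p.u - d p.a (-p.a), -p.a⟩⟩

def twEGroup (d : A → A → TwRC)
    (hsymm : ∀ a b, d a b = d b a)
    (hcoc : ∀ a b e, d a b + d (a + b) e = d b e + d a (b + e))
    (h01 : ∀ b, d 0 b = 0) (h02 : ∀ a, d a 0 = 0) :
    AddCommGroup (TwE d) where
  add p q := p + q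
  zero := 0
  neg p := -p
  nsmul := nsmulRec
  zsmul := zsmulRec
  add_assoc p q r := by
    refine TwE.ext ?_ ?_
    · show p.u + q.u + d p.a q.a + r.u + d (p.a + q.a) r.a
        = p.u + (q.u + r.u + d q.a r.a) + d p.a (q.a + r.a)
      have h := hcoc p.a q.a r.a
      rw [← sub_eq_zero] at h ⊢
      calc p.u + q.u + d p.a q.a + r.u + d (p.a + q.a) r.a
            - (p.u + (q.u + r.u + d q.a r.a) + d p.a (q.a + r.a))
          = d p.a q.a + d (p.a + q.a) r.a - (d q.a r.a + d p.a (q.a + r.a)) := by abel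
        _ = 0 := h
    · show p.a + q.a + r.a = p.a + (q.a + r.a)
      exact add_assoc _ _ _
  zero_add p := by
    refine TwE.ext ?_ ?_
    · show 0 + p.u + d 0 p.a = p.u
      rw [h01]; abel
    · show 0 + p.a = p.a
      exact zero_add _
  add_zero p := by
    refine TwE.ext ?_ ?_
    · show p.u + 0 + d p.a 0 = p.u
      rw [h02]; abel
    · show p.a + 0 = p.a
      exact add_zero _
  add_comm p q := by
    refine TwE.ext ?_ ?_
    · show p.u + q.u + d p.a q.a = q.u + p.u + d q.a p.a
      rw [hsymm p.a q.a]; abel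
    · show p.a + q.a = q.a + p.a
      exact add_comm _ _
  neg_add_cancel p := by
    refine TwE.ext ?_ ?_
    · show -p.u - d p.a (-p.a) + p.u + d (-p.a) p.a = 0
      rw [hsymm (-p.a) p.a]; abel
    · show -p.a + p.a = 0
      exact neg_add_cancel _

lemma twSplit (d : A → A → TwRC)
    (hsymm : ∀ a b, d a b = d b a)
    (hcoc : ∀ a b e, d a b + d (a + b) e = d b e + d a (b + e))
    (h01 : ∀ b, d 0 b = 0) (h02 : ∀ a, d a 0 = 0) :
    ∃ h : A → TwRC, h 0 = 0 ∧ ∀ a b, d a b = h a + h b - h (a + b) := by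
  letI := twEGroup d hsymm hcoc h01 h02
  let i : TwRC →+ TwE d := AddMonoidHom.mk' (fun v => ⟨v, 0⟩)
    (fun v w => by
      refine TwE.ext ?_ ?_
      · show v + w = v + w + d 0 0
        rw [h01]; abel
      · show (0 : A) = 0 + 0
        rw [add_zero])
  have hi : Function.Injective i := fun v w h => congrArg TwE.u h
  obtain ⟨ρ, hρ⟩ := twExt i hi (AddMonoidHom.id TwRC)
  refine ⟨fun a => ρ ⟨0, a⟩, ?_, ?_⟩
  · show ρ ⟨0, 0⟩ = 0
    have : (⟨0, 0⟩ : TwE d) = 0 := rfl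
    rw [this, map_zero]
  · intro a b
    have key : (⟨0, a⟩ : TwE d) + ⟨0, b⟩ = i (d a b) + ⟨0, a + b⟩ := by
      refine TwE.ext ?_ ?_
      · show 0 + 0 + d a b = d a b + 0 + d 0 (a + b)
        rw [h01]; abel
      · show a + b = 0 + (a + b)
        rw [zero_add]
    have := congrArg ρ key
    rw [map_add, map_add, hρ] at this
    show d a b = ρ ⟨0, a⟩ + ρ ⟨0, b⟩ - ρ ⟨0, a + b⟩
    rw [this]
    show d a b = AddMonoidHom.id TwRC (d a b) + ρ ⟨0, a + b⟩ - ρ ⟨0, a + b⟩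
    simp



section commutators

variable {G : Type u} [Group G]

lemma twCommMem (x y : G) : Abelianization.of ⁅x, y⁆ = 1 := by
  rw [map_commutatorElement]
  exact commutatorElement_eq_one_iff_commute.mpr (mul_comm _ _)

lemma twKerCentral (hG : ∀ x y : G, ⁅x, y⁆ ∈ Subgroup.center G)
    {n : G} (hn : Abelianization.of n = 1) (g : G) : g * n = n * g := by
  have hmem : n ∈ commutator G := by
    rw [← QuotientGroup.eq_one_iff n]
    exact hn
  have hle : commutator G ≤ Subgroup.center G := by
    rw [commutator_def, Subgroup.commutator_le]
    exact fun g1 _ g2 _ => hG g1 g2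
  exact Subgroup.mem_center_iff.mp (hle hmem) g

lemma twCommMulLeft (hG : ∀ x y : G, ⁅x, y⁆ ∈ Subgroup.center G) (x y z : G) :
    ⁅x * y, z⁆ = ⁅x, z⁆ * ⁅y, z⁆ := by
  have h1 : ⁅x * y, z⁆ = x * ⁅y, z⁆ * x⁻¹ * ⁅x, z⁆ := by
    simp only [commutatorElement_def]; group
  have hc := Subgroup.mem_center_iff.mp (hG y z)
  rw [h1, hc x]
  have h2 : ⁅y, z⁆ * x * x⁻¹ * ⁅x, z⁆ = ⁅y, z⁆ * ⁅x, z⁆ := by group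
  rw [h2, ← hc ⁅x, z⁆]

lemma twCommMulRight (hG : ∀ x y : G, ⁅x, y⁆ ∈ Subgroup.center G) (x y z : G) :
    ⁅x, y * z⁆ = ⁅x, y⁆ * ⁅x, z⁆ := by
  have h1 : ⁅x, y * z⁆ = ⁅x, y⁆ * (y * ⁅x, z⁆ * y⁻¹) := by
    simp only [commutatorElement_def]; group
  have hc := Subgroup.mem_center_iff.mp (hG x z)
  rw [h1, hc y]
  group

lemma twCommKRight {k : G} (hk : ∀ g : G, g * k = k * g) (x y : G) :
    ⁅x * k, y⁆ = ⁅x, y⁆ := by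
  have h1 : ⁅x * k, y⁆ = x * (k * y) * k⁻¹ * x⁻¹ * y⁻¹ := by
    simp only [commutatorElement_def]; group
  rw [h1, ← hk y]
  simp only [commutatorElement_def]; group

lemma twNuAux (u v w x y : G)
    (hα : ∀ g : G, g * (u⁻¹ * x) = (u⁻¹ * x) * g)
    (hδ : ∀ g : G, g * (u * v * w⁻¹) = (u * v * w⁻¹) * g) :
    w⁻¹ * (x * y) = (u * v * w⁻¹) * ((u⁻¹ * x) * (v⁻¹ * y)) := by
  calc w⁻¹ * (x * y)
      = w⁻¹ * (u * ((u⁻¹ * x) * v) * (v⁻¹ * y)) := by group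
    _ = w⁻¹ * (u * (v * (u⁻¹ * x)) * (v⁻¹ * y)) := by rw [hα v]
    _ = w⁻¹ * (u * v * w⁻¹) * w * ((u⁻¹ * x) * (v⁻¹ * y)) := by group
    _ = (u * v * w⁻¹) * w⁻¹ * w * ((u⁻¹ * x) * (v⁻¹ * y)) := by rw [hδ w⁻¹]
    _ = (u * v * w⁻¹) * ((u⁻¹ * x) * (v⁻¹ * y)) := by group

end commutators


section sep

variable {G : Type u} [Group G]

lemma twSep (hG : ∀ x y : G, ⁅x, y⁆ ∈ Subgroup.center G)
    (n₀ : G) (hn₀K : Abelianization.of n₀ = 1) (hn₀ : n₀ ≠ 1) :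
    ∃ (β : Additive (Abelianization G) →+ Additive (Abelianization G) →+ TwRC)
      (f : G → TwRC),
      (∀ x y : G, f (x * y) = f x + f y
        + β (Additive.ofMul (Abelianization.of x)) (Additive.ofMul (Abelianization.of y)))
      ∧ f n₀ ≠ 0 := by
  classical
  set K : Subgroup G := (Abelianization.of (G := G)).ker with hK
  have hmemK : ∀ {g : G}, Abelianization.of g = 1 → g ∈ K := fun h => h
  have hKval : ∀ {g : G}, g ∈ K → Abelianization.of g = 1 := fun h => h
  have hcen : ∀ k ∈ K, ∀ g : G, g * k = k * g := fun k hk g =>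
    twKerCentral hG (hKval hk) g
  letI : CommGroup ↥K :=
    { (inferInstance : Group ↥K) with
      mul_comm := fun a b => Subtype.ext (hcen b.1 b.2 a.1) }
  -- a set-theoretic section of the abelianization, normalized at 1
  have hsurj : Function.Surjective (Abelianization.of (G := G)) := by
    intro a
    obtain ⟨g, hg⟩ := Quotient.exists_rep a
    exact ⟨g, by rw [← Abelianization.mk_eq_of]; exact hg⟩
  choose s₀ hs₀ using hsurj
  set sm : Abelianization G → G := fun a => if a = 1 then 1 else s₀ a with hsm
  have hs : ∀ a, Abelianization.of (sm a) = a := by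
    intro a
    by_cases h : a = 1 <;> simp [hsm, h, hs₀]
  have hs1 : sm 1 = 1 := by simp [hsm]
  set π : G → Additive (Abelianization G) :=
    fun g => Additive.ofMul (Abelianization.of g) with hπdef
  set sA : Additive (Abelianization G) → G := fun a => sm (Additive.toMul a) with hsAdef
  have hπs : ∀ a, Abelianization.of (sA a) = Additive.toMul a := fun a => hs _
  have hπmul : ∀ x y : G, π (x * y) = π x + π y := by
    intro x y
    show Additive.ofMul (Abelianization.of (x * y)) = _
    rw [map_mul, ofMul_mul]
  have hsA0 : sA (0 : Additive (Abelianization G)) = 1 := by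
    show sm (Additive.toMul (0 : Additive (Abelianization G))) = 1
    rw [toMul_zero, hs1]
  -- ν and the cocycle cc
  have hνmem : ∀ g : G, (sA (π g))⁻¹ * g ∈ K := by
    intro g
    have : Abelianization.of ((sA (π g))⁻¹ * g) = 1 := by
      rw [map_mul, map_inv, hπs]
      show (Additive.toMul (π g))⁻¹ * Abelianization.of g = 1
      rw [hπdef]
      show (Additive.toMul (Additive.ofMul (Abelianization.of g)))⁻¹ * _ = 1
      rw [toMul_ofMul, inv_mul_cancel]
    exact hmemK this
  set ν : G → ↥K := fun g => ⟨(sA (π g))⁻¹ * g, hνmem g⟩ with hνdef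
  have hcmem : ∀ a b, sA a * sA b * (sA (a + b))⁻¹ ∈ K := by
    intro a b
    apply hmemK
    rw [map_mul, map_mul, map_inv, hπs, hπs, hπs, toMul_add, mul_inv_cancel]
  set cc : Additive (Abelianization G) → Additive (Abelianization G) → ↥K :=
    fun a b => ⟨sA a * sA b * (sA (a + b))⁻¹, hcmem a b⟩ with hccdef
  -- the character separating n₀
  have hne0 : (Additive.ofMul (⟨n₀, hmemK hn₀K⟩ : ↥K)) ≠ (0 : Additive ↥K) := by
    intro h
    apply hn₀
    have h2 : (⟨n₀, hmemK hn₀K⟩ : ↥K) = 1 := Additive.ofMul.injective h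
    exact congrArg Subtype.val h2
  obtain ⟨χ', hχ'⟩ := twChar hne0
  set χ : ↥K → TwRC := fun k => χ' (Additive.ofMul k) with hχdef
  have hχmul : ∀ k l : ↥K, χ (k * l) = χ k + χ l := by
    intro k l
    show χ' (Additive.ofMul (k * l)) = _
    rw [ofMul_mul, map_add]
  have hχone : χ (1 : ↥K) = 0 := by
    show χ' (Additive.ofMul (1 : ↥K)) = 0
    rw [ofMul_one, map_zero]
  have hχinv : ∀ k : ↥K, χ k⁻¹ = -χ k := by
    intro k
    show χ' (Additive.ofMul k⁻¹) = -χ' (Additive.ofMul k)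
    rw [ofMul_inv, map_neg]
  have hcommK : ∀ x y : G, ⁅x, y⁆ ∈ K := fun x y => hmemK (twCommMem x y)
  -- the commutator form on the abelianization
  set lam : Additive (Abelianization G) → Additive (Abelianization G) → TwRC :=
    fun a b => χ ⟨⁅sA a, sA b⁆, hcommK _ _⟩ with hlamdef
  -- translation invariance tool
  have htrans : ∀ a a' : Additive (Abelianization G),
      ∃ k : G, (∀ g : G, g * k = k * g) ∧ sA a * sA a' = sA (a + a') * k := by
    intro a a'
    refine ⟨(sA (a + a'))⁻¹ * (sA a * sA a'), ?_, by group⟩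
    intro g
    apply hcen
    apply hmemK
    rw [map_mul, map_mul, map_inv, hπs, hπs, hπs, toMul_add]
    group
  have hlam1 : ∀ a a' b, lam (a + a') b = lam a b + lam a' b := by
    intro a a' b
    obtain ⟨k, hkc, hk⟩ := htrans a a'
    have h2 : ⁅sA (a + a'), sA b⁆ = ⁅sA a * sA a', sA b⁆ := by
      rw [hk]
      exact (twCommKRight hkc _ _).symm
    have h3 : ⁅sA a * sA a', sA b⁆ = ⁅sA a, sA b⁆ * ⁅sA a', sA b⁆ :=
      twCommMulLeft hG _ _ _
    show χ ⟨⁅sA (a + a'), sA b⁆, hcommK _ _⟩ = _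
    have h4 : (⟨⁅sA (a + a'), sA b⁆, hcommK _ _⟩ : ↥K)
        = ⟨⁅sA a, sA b⁆, hcommK _ _⟩ * ⟨⁅sA a', sA b⁆, hcommK _ _⟩ :=
      Subtype.ext (by
        show ⁅sA (a + a'), sA b⁆ = ⁅sA a, sA b⁆ * ⁅sA a', sA b⁆
        rw [h2, h3])
    rw [h4, hχmul]
  have hcommswap : ∀ x y : G, ⁅x, y⁆ = ⁅y, x⁆⁻¹ := by
    intro x y
    rw [commutatorElement_inv]
  have hlam2 : ∀ a b b', lam a (b + b') = lam a b + lam a b' := by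
    intro a b b'
    obtain ⟨k, hkc, hk⟩ := htrans b b'
    have h2 : ⁅sA a, sA (b + b')⁆ = ⁅sA a, sA b * sA b'⁆ := by
      rw [hcommswap (sA a) (sA (b + b')), hcommswap (sA a) (sA b * sA b'), hk]
      rw [twCommKRight hkc _ _]
    have h3 : ⁅sA a, sA b * sA b'⁆ = ⁅sA a, sA b⁆ * ⁅sA a, sA b'⁆ :=
      twCommMulRight hG _ _ _
    show χ ⟨⁅sA a, sA (b + b')⁆, hcommK _ _⟩ = _
    have h4 : (⟨⁅sA a, sA (b + b')⁆, hcommK _ _⟩ : ↥K)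
        = ⟨⁅sA a, sA b⁆, hcommK _ _⟩ * ⟨⁅sA a, sA b'⁆, hcommK _ _⟩ :=
      Subtype.ext (by
        show ⁅sA a, sA (b + b')⁆ = ⁅sA a, sA b⁆ * ⁅sA a, sA b'⁆
        rw [h2, h3])
    rw [h4, hχmul]
  have hlamdiag : ∀ a, lam a a = 0 := by
    intro a
    show χ ⟨⁅sA a, sA a⁆, hcommK _ _⟩ = 0
    have h9 : (⟨⁅sA a, sA a⁆, hcommK _ _⟩ : ↥K) = 1 :=
      Subtype.ext (commutatorElement_self _)
    rw [h9, hχone]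
  obtain ⟨βf, hβf, hβanti⟩ := twGood_all _ lam ⟨hlam1, hlam2⟩ hlamdiag
  -- cocycle identity for cc
  have hccK : ∀ a b e, cc a b * cc (a + b) e = cc b e * cc a (b + e) := by
    intro a b e
    apply Subtype.ext
    show (sA a * sA b * (sA (a + b))⁻¹) * (sA (a + b) * sA e * (sA ((a + b) + e))⁻¹)
        = (sA b * sA e * (sA (b + e))⁻¹) * (sA a * sA (b + e) * (sA (a + (b + e)))⁻¹)
    rw [add_assoc a b e]
    have hδK : sA b * sA e * (sA (b + e))⁻¹ ∈ K := hcmem b e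
    have hδc := hcen _ hδK
    have hL : sA a * sA b * (sA (a + b))⁻¹ * (sA (a + b) * sA e * (sA (a + (b + e)))⁻¹)
        = sA a * (sA b * sA e) * (sA (a + (b + e)))⁻¹ := by group
    have h1 : sA b * sA e = (sA b * sA e * (sA (b + e))⁻¹) * sA (b + e) := by group
    rw [hL]
    calc sA a * (sA b * sA e) * (sA (a + (b + e)))⁻¹
        = sA a * ((sA b * sA e * (sA (b + e))⁻¹) * sA (b + e)) * (sA (a + (b + e)))⁻¹ := by
          rw [← h1]
      _ = sA a * (sA b * sA e * (sA (b + e))⁻¹) * sA (b + e) * (sA (a + (b + e)))⁻¹ := by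
          group
      _ = (sA b * sA e * (sA (b + e))⁻¹) * sA a * sA (b + e) * (sA (a + (b + e)))⁻¹ := by
          rw [hδc (sA a)]
      _ = (sA b * sA e * (sA (b + e))⁻¹) * (sA a * sA (b + e) * (sA (a + (b + e)))⁻¹) := by
          group
  -- symmetry defect of cc is the commutator form
  have hccsym : ∀ a b, cc a b * (cc b a)⁻¹ = (⟨⁅sA a, sA b⁆, hcommK _ _⟩ : ↥K) := by
    intro a b
    apply Subtype.ext
    show (sA a * sA b * (sA (a + b))⁻¹) * (sA b * sA a * (sA (b + a))⁻¹)⁻¹ = ⁅sA a, sA b⁆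
    rw [show b + a = a + b from add_comm b a]
    simp only [commutatorElement_def]
    group
  -- multiplication rule for ν
  have hνmul : ∀ x y : G, ν (x * y) = cc (π x) (π y) * (ν x * ν y) := by
    intro x y
    apply Subtype.ext
    show (sA (π (x * y)))⁻¹ * (x * y)
        = (sA (π x) * sA (π y) * (sA (π x + π y))⁻¹)
          * (((sA (π x))⁻¹ * x) * ((sA (π y))⁻¹ * y))
    rw [hπmul x y]
    exact twNuAux _ _ _ _ _ (fun g => (hcen _ (hνmem x) g))
      (fun g => (hcen _ (hcmem (π x) (π y)) g))
  have hχν : ∀ x y : G, χ (ν (x * y)) = χ (cc (π x) (π y)) + χ (ν x) + χ (ν y) := by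
    intro x y
    rw [hνmul, hχmul, hχmul, add_assoc]
  -- the symmetric 2-cocycle d and its splitting
  set d : Additive (Abelianization G) → Additive (Abelianization G) → TwRC :=
    fun a b => χ (cc a b) - βf a b with hddef
  have hsymdiff : ∀ a b, χ (cc a b) - χ (cc b a) = lam a b := by
    intro a b
    rw [sub_eq_add_neg, ← hχinv, ← hχmul, hccsym]
  have hdsym : ∀ a b, d a b = d b a := by
    intro a b
    have h5 := hβanti a b
    rw [← sub_eq_zero]
    have hX : d a b - d b a
        = (χ (cc a b) - χ (cc b a)) - (βf a b - βf b a) := by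
      show (χ (cc a b) - βf a b) - (χ (cc b a) - βf b a) = _
      abel
    rw [hX, hsymdiff, h5, sub_self]
  have hdcoc : ∀ a b e, d a b + d (a + b) e = d b e + d a (b + e) := by
    intro a b e
    have h6 : χ (cc a b) + χ (cc (a + b) e) = χ (cc b e) + χ (cc a (b + e)) := by
      rw [← hχmul, ← hχmul, hccK]
    have h7 : βf a b + βf (a + b) e = βf b e + βf a (b + e) := by
      rw [hβf.1, hβf.2]
      abel
    rw [← sub_eq_zero]
    have hX : d a b + d (a + b) e - (d b e + d a (b + e))
        = (χ (cc a b) + χ (cc (a + b) e) - (χ (cc b e) + χ (cc a (b + e))))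
          - (βf a b + βf (a + b) e - (βf b e + βf a (b + e))) := by
      show (χ (cc a b) - βf a b) + (χ (cc (a + b) e) - βf (a + b) e)
          - ((χ (cc b e) - βf b e) + (χ (cc a (b + e)) - βf a (b + e))) = _
      abel
    rw [hX, h6, h7, sub_self, sub_self, sub_zero]
  have hβf0l : ∀ b, βf 0 b = 0 := by
    intro b
    have h8 := hβf.1 0 0 b
    rw [add_zero] at h8
    exact right_eq_add.mp h8
  have hβf0r : ∀ a, βf a 0 = 0 := by
    intro a
    have h8 := hβf.2 a 0 0
    rw [add_zero] at h8
    exact right_eq_add.mp h8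
  have hd01 : ∀ b, d 0 b = 0 := by
    intro b
    have hc1 : cc 0 b = 1 := by
      apply Subtype.ext
      show sA 0 * sA b * (sA (0 + b))⁻¹ = 1
      rw [zero_add, hsA0, one_mul, mul_inv_cancel]
    show χ (cc 0 b) - βf 0 b = 0
    rw [hc1, hχone, hβf0l, sub_zero]
  have hd02 : ∀ a, d a 0 = 0 := by
    intro a
    have hc1 : cc a 0 = 1 := by
      apply Subtype.ext
      show sA a * sA 0 * (sA (a + 0))⁻¹ = 1
      rw [add_zero, hsA0, mul_one, mul_inv_cancel]
    show χ (cc a 0) - βf a 0 = 0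
    rw [hc1, hχone, hβf0r, sub_zero]
  obtain ⟨h, hh0, hsplit⟩ := twSplit d hdsym hdcoc hd01 hd02
  refine ⟨hβf.hom, fun g => χ (ν g) + h (π g), ?_, ?_⟩
  · intro x y
    show χ (ν (x * y)) + h (π (x * y))
        = (χ (ν x) + h (π x)) + (χ (ν y) + h (π y)) + βf (π x) (π y)
    rw [hπmul, hχν, ← sub_eq_zero]
    have hX : χ (cc (π x) (π y)) + χ (ν x) + χ (ν y) + h (π x + π y)
        - ((χ (ν x) + h (π x)) + (χ (ν y) + h (π y)) + βf (π x) (π y))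
        = (χ (cc (π x) (π y)) - βf (π x) (π y))
          - (h (π x) + h (π y) - h (π x + π y)) := by abel
    rw [hX, show χ (cc (π x) (π y)) - βf (π x) (π y)
        = h (π x) + h (π y) - h (π x + π y) from hsplit (π x) (π y), sub_self]
  · have hπn : π n₀ = 0 := by
      show Additive.ofMul (Abelianization.of n₀) = 0
      rw [hn₀K, ofMul_one]
    have hνn : ν n₀ = ⟨n₀, hmemK hn₀K⟩ := by
      apply Subtype.ext
      show (sA (π n₀))⁻¹ * n₀ = n₀
      rw [hπn, hsA0, inv_one, one_mul]
    show χ (ν n₀) + h (π n₀) ≠ 0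
    rw [hπn, hh0, add_zero, hνn]
    exact hχ'

end sep


end TwistedHelpers

/-- Every nilpotent group `G` of class at most 2 embeds into a central extension of
abelian groups with bilinear cocycle: `G` embeds into a twisted product
`G^{ab} ×_β L` for some abelian group `L` and bilinear `β`, compatibly with the
projection `G → G^{ab}`. -/
theorem class_two_embeds_in_twisted_product
    {G : Type u} [Group G] (hG : ∀ x y : G, ⁅x, y⁆ ∈ Subgroup.center G) :
    ∃ (L : Type u) (_ : AddCommGroup L)
      (β : Additive (Abelianization G) →+ Additive (Abelianization G) →+ L)
      (φ : G → Additive (Abelianization G) × L),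
      (letI : Group (Additive (Abelianization G) × L) := twGroup β
        ∀ x y : G, φ (x * y) = φ x * φ y) ∧
      Function.Injective φ ∧
      (∀ g : G, (φ g).1 = Additive.ofMul (Abelianization.of g)) := by
  classical
  have hsep := fun i : {n : G // Abelianization.of n = 1 ∧ n ≠ 1} =>
    twSep hG i.1 i.2.1 i.2.2
  choose βi fi hfi hfn using hsep
  refine ⟨{n : G // Abelianization.of n = 1 ∧ n ≠ 1} → TwRC, inferInstance,
    AddMonoidHom.mk' (fun a => AddMonoidHom.mk'
        (fun b => fun i => βi i a b)
        (fun b b' => funext fun i => by simp))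
      (fun a a' => AddMonoidHom.ext fun b => funext fun i => by simp),
    fun g => (Additive.ofMul (Abelianization.of g), fun i => fi i g), ?_, ?_, fun g => rfl⟩
  · intro x y
    refine Prod.ext ?_ ?_
    · show Additive.ofMul (Abelianization.of (x * y))
        = Additive.ofMul (Abelianization.of x) + Additive.ofMul (Abelianization.of y)
      rw [map_mul, ofMul_mul]
    · show (fun i => fi i (x * y))
        = (fun i => fi i x) + (fun i => fi i y)
          + (fun i => βi i (Additive.ofMul (Abelianization.of x))
              (Additive.ofMul (Abelianization.of y)))
      funext i
      exact hfi i x y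
  · intro x y hxy
    have h1 : Additive.ofMul (Abelianization.of x) = Additive.ofMul (Abelianization.of y) :=
      congrArg Prod.fst hxy
    have h2 : ∀ i, fi i x = fi i y := fun i => congrFun (congrArg Prod.snd hxy) i
    have hofeq : Abelianization.of x = Abelianization.of y := Additive.ofMul.injective h1
    have hn1 : Abelianization.of (x⁻¹ * y) = 1 := by
      rw [map_mul, map_inv, ← hofeq, inv_mul_cancel]
    by_cases hne : x⁻¹ * y = 1
    · exact inv_mul_eq_one.mp hne
    · exfalso
      have hπn : Additive.ofMul (Abelianization.of (x⁻¹ * y)) = 0 := by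
        rw [hn1, ofMul_one]
      have h3 := hfi ⟨x⁻¹ * y, hn1, hne⟩ x (x⁻¹ * y)
      rw [mul_inv_cancel_left] at h3
      rw [hπn, map_zero, add_zero, h2 ⟨x⁻¹ * y, hn1, hne⟩] at h3
      exact hfn ⟨x⁻¹ * y, hn1, hne⟩ (left_eq_add.mp h3)
end TwistedHelpers
end

section
/- Let p be an odd prime and G = ⟨x,y,z | x^p = y^p = [x,y]^p = [[x,y],x] = [[x,y],y] = [x,z] = [y,z] = 1, z^p = [x,y]⟩. Then G is nilpotent of class 2 but is not isomorphic to any twisted product A ×_γ B of abelian groups of exponent p, since every such twisted product has exponent p while z has order p² in G. -/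
set_option linter.unusedSectionVars false

open scoped commutatorElement

section TwLemmas

variable {A B : Type*} [AddCommGroup A] [AddCommGroup B] (δ : A →+ A →+ B)

theorem tw_mul (g h : A × B) :
    (letI := twGroup δ; g * h) = (g.1 + h.1, g.2 + h.2 + δ g.1 h.1) := rfl

theorem tw_inv (g : A × B) :
    (letI := twGroup δ; g⁻¹) = (-g.1, -g.2 + δ g.1 g.1) := rfl

theorem tw_one : (letI := twGroup δ; (1 : A × B)) = (0, 0) := rfl

theorem tw_pow (g : A × B) (n : ℕ) :
    (letI := twGroup δ; g ^ n) = (n • g.1, n • g.2 + n.choose 2 • δ g.1 g.1) := by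
  letI := twGroup δ
  induction n with
  | zero => simp; rfl
  | succ n ih =>
    rw [pow_succ, ih, tw_mul]
    refine Prod.ext ?_ ?_
    · show n • g.1 + g.1 = (n + 1) • g.1
      rw [succ_nsmul]
    · show n • g.2 + n.choose 2 • δ g.1 g.1 + g.2 + δ (n • g.1) g.1
        = (n + 1) • g.2 + (n + 1).choose 2 • δ g.1 g.1
      rw [map_nsmul, AddMonoidHom.nsmul_apply, Nat.choose_succ_succ, Nat.choose_one_right,
        succ_nsmul]
      rw [add_nsmul]
      abel

theorem tw_comm (g h : A × B) :
    (letI := twGroup δ; ⁅g, h⁆) = (0, δ g.1 h.1 - δ h.1 g.1) := by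
  letI := twGroup δ
  rw [commutatorElement_def, tw_mul, tw_mul, tw_mul, tw_inv, tw_inv]
  refine Prod.ext ?_ ?_
  · show g.1 + h.1 + -g.1 + -h.1 = 0; abel
  · show g.2 + h.2 + δ g.1 h.1 + (-g.2 + δ g.1 g.1) + δ (g.1 + h.1) (-g.1)
        + (-h.2 + δ h.1 h.1) + δ (g.1 + h.1 + -g.1) (-h.1)
      = δ g.1 h.1 - δ h.1 g.1
    simp [map_add, map_neg]
    abel

theorem tw_exp {p : ℕ} (hodd : Odd p) (hA : ∀ a : A, p • a = 0) (hB : ∀ b : B, p • b = 0)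
    (g : A × B) : (letI := twGroup δ; g ^ p = 1) := by
  letI := twGroup δ
  obtain ⟨k, hk⟩ := hodd
  have hch : p.choose 2 = k * p := by
    subst hk
    have h1 : 2 * k + 1 - 1 = 2 * k := by omega
    rw [Nat.choose_two_right, h1, show (2 * k + 1) * (2 * k) = k * (2 * k + 1) * 2 by ring,
      Nat.mul_div_cancel _ two_pos]
  rw [tw_pow, tw_one, hA, hB, hch, mul_nsmul, hB]
  simp

set_option linter.unusedSectionVars false
section Model

variable (p : ℕ) [NeZero p]

lemma mulcast (n : ℕ) : ((n % p : ℕ) : ZMod (p ^ 2)) * p = (n : ZMod (p ^ 2)) * p := by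
  conv_rhs => rw [← Nat.div_add_mod n p]
  have hpp : (p : ZMod (p ^ 2)) * p = 0 := by
    rw [← Nat.cast_mul, ← pow_two, ZMod.natCast_self]
  push_cast
  linear_combination (-((n / p : ℕ) : ZMod (p ^ 2))) * hpp

def Fmap : ZMod p →+ ZMod (p ^ 2) :=
  AddMonoidHom.mk' (fun a => ((a.val : ℕ) : ZMod (p ^ 2)) * p) fun a b => by
    show (((a + b).val : ℕ) : ZMod (p ^ 2)) * p = ((a.val : ℕ) : ZMod (p ^ 2)) * p + ((b.val : ℕ) : ZMod (p ^ 2)) * p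
    rw [ZMod.val_add, mulcast]
    push_cast
    ring

def δmod : (ZMod p × ZMod p) →+ (ZMod p × ZMod p) →+ ZMod (p ^ 2) :=
  AddMonoidHom.mk'
    (fun u => AddMonoidHom.mk' (fun v => Fmap p (u.1 * v.2)) fun v w => by
      show Fmap p (u.1 * (v + w).2) = Fmap p (u.1 * v.2) + Fmap p (u.1 * w.2)
      rw [show (v + w).2 = v.2 + w.2 from rfl, mul_add, map_add])
    fun u u' => by
      ext v
      show Fmap p ((u + u').1 * v.2) = _
      rw [show (u + u').1 = u.1 + u'.1 from rfl, add_mul, map_add]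
      rfl

lemma Fmap_zero : Fmap p 0 = 0 := map_zero _

lemma Fmap_one (hp : 1 < p) : Fmap p 1 = (p : ZMod (p ^ 2)) := by
  haveI : Fact (1 < p) := ⟨hp⟩
  show ((((1 : ZMod p).val : ℕ)) : ZMod (p ^ 2)) * p = p
  rw [ZMod.val_one, Nat.cast_one, one_mul]

lemma smulp_zmod (a : ZMod p) : p • a = 0 := by
  rw [nsmul_eq_mul, ZMod.natCast_self, zero_mul]

lemma p_ne_zero_zmodsq (hp : 1 < p) : (p : ZMod (p ^ 2)) ≠ 0 := by
  rw [Ne, ZMod.natCast_eq_zero_iff]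
  intro h
  have := Nat.le_of_dvd (by omega) h
  nlinarith [this]

end Model

universe u

/-- Relations for the group
`G = ⟨x,y,z | x^p = y^p = [x,y]^p = [[x,y],x] = [[x,y],y] = [x,z] = [y,z] = 1,
z^p = [x,y]⟩`, with generators `x = 0`, `y = 1`, `z = 2`. -/
def nilRels (p : ℕ) : Set (FreeGroup (Fin 3)) :=
  { (FreeGroup.of (0 : Fin 3)) ^ p, (FreeGroup.of (1 : Fin 3)) ^ p,
    ⁅FreeGroup.of (0 : Fin 3), FreeGroup.of (1 : Fin 3)⁆ ^ p,
    ⁅⁅FreeGroup.of (0 : Fin 3), FreeGroup.of (1 : Fin 3)⁆, FreeGroup.of (0 : Fin 3)⁆,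
    ⁅⁅FreeGroup.of (0 : Fin 3), FreeGroup.of (1 : Fin 3)⁆, FreeGroup.of (1 : Fin 3)⁆,
    ⁅FreeGroup.of (0 : Fin 3), FreeGroup.of (2 : Fin 3)⁆, ⁅FreeGroup.of (1 : Fin 3), FreeGroup.of (2 : Fin 3)⁆,
    (FreeGroup.of (2 : Fin 3)) ^ p * ⁅FreeGroup.of (0 : Fin 3), FreeGroup.of (1 : Fin 3)⁆⁻¹ }

@[ext]
structure Hc (p : ℕ) : Type where
  v : ZMod p × ZMod p
  c : ZMod (p ^ 2)

instance (p : ℕ) [NeZero p] : Group (Hc p) where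
  mul a b := ⟨a.v + b.v, a.c + b.c + δmod p a.v b.v⟩
  one := ⟨0, 0⟩
  inv a := ⟨-a.v, -a.c + δmod p a.v a.v⟩
  mul_assoc a b c := by
    refine Hc.ext ?_ ?_
    · show a.v + b.v + c.v = a.v + (b.v + c.v); abel
    · show a.c + b.c + δmod p a.v b.v + c.c + δmod p (a.v + b.v) c.v
        = a.c + (b.c + c.c + δmod p b.v c.v) + δmod p a.v (b.v + c.v)
      simp [map_add]; abel
  one_mul a := by
    refine Hc.ext ?_ ?_
    · show 0 + a.v = a.v; simp
    · show 0 + a.c + δmod p 0 a.v = a.c; simp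
  mul_one a := by
    refine Hc.ext ?_ ?_
    · show a.v + 0 = a.v; simp
    · show a.c + 0 + δmod p a.v 0 = a.c; simp
  inv_mul_cancel a := by
    refine Hc.ext ?_ ?_
    · show -a.v + a.v = 0; simp
    · show -a.c + δmod p a.v a.v + a.c + δmod p (-a.v) a.v = 0
      simp [map_neg]

section RelSat

variable (p : ℕ) [NeZero p]

lemma Hone : (1 : Hc p) = ⟨0, 0⟩ := rfl

lemma Hmk_eq (u v : ZMod p × ZMod p) (b c : ZMod (p ^ 2)) :
    ((⟨u, b⟩ : Hc p) = ⟨v, c⟩) ↔ u = v ∧ b = c := by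
  rw [Hc.mk.injEq]

lemma Hmul (u v : ZMod p × ZMod p) (b c : ZMod (p ^ 2)) :
    (⟨u, b⟩ : Hc p) * ⟨v, c⟩ = ⟨u + v, b + c + Fmap p (u.1 * v.2)⟩ := rfl

lemma Hinv (u : ZMod p × ZMod p) (b : ZMod (p ^ 2)) :
    (⟨u, b⟩ : Hc p)⁻¹ = ⟨-u, -b + Fmap p (u.1 * u.2)⟩ := rfl

lemma Hpow (u : ZMod p × ZMod p) (b : ZMod (p ^ 2)) (n : ℕ) :
    (⟨u, b⟩ : Hc p) ^ n = ⟨n • u, n • b + n.choose 2 • Fmap p (u.1 * u.2)⟩ := by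
  induction n with
  | zero => rw [pow_zero, Hone, Hmk_eq]; simp
  | succ n ih =>
    rw [pow_succ, ih, Hmul, Hmk_eq]
    constructor
    · rw [succ_nsmul]
    · have h1 : (n • u).1 = n • u.1 := rfl
      rw [h1, smul_mul_assoc, map_nsmul, Nat.choose_succ_succ, Nat.choose_one_right,
        succ_nsmul, add_nsmul]
      abel

lemma Hcomm (u v : ZMod p × ZMod p) (b c : ZMod (p ^ 2)) :
    ⁅(⟨u, b⟩ : Hc p), (⟨v, c⟩ : Hc p)⁆ = ⟨0, Fmap p (u.1 * v.2) - Fmap p (v.1 * u.2)⟩ := by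
  rw [commutatorElement_def]
  simp only [Hinv, Hmul, Hmk_eq]
  constructor
  · abel
  · have h1 : ∀ w w' : ZMod p × ZMod p, (w + w').1 = w.1 + w'.1 := fun _ _ => rfl
    have h2 : ∀ w w' : ZMod p × ZMod p, (w + w').2 = w.2 + w'.2 := fun _ _ => rfl
    have h3 : ∀ w : ZMod p × ZMod p, (-w).1 = -w.1 := fun _ => rfl
    have h4 : ∀ w : ZMod p × ZMod p, (-w).2 = -w.2 := fun _ => rfl
    simp only [h1, h2, h3, h4, mul_add, add_mul, neg_mul, mul_neg, map_add, map_neg, neg_neg]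
    abel

def fmod : Fin 3 → Hc p
  | 0 => ⟨⟨1, 0⟩, 0⟩
  | 1 => ⟨⟨0, 1⟩, 0⟩
  | 2 => ⟨⟨0, 0⟩, 1⟩

lemma fmod0 : fmod p 0 = ⟨⟨1, 0⟩, 0⟩ := rfl
lemma fmod1 : fmod p 1 = ⟨⟨0, 1⟩, 0⟩ := rfl
lemma fmod2 : fmod p 2 = ⟨⟨0, 0⟩, 1⟩ := rfl

lemma hXY (hp : 1 < p) :
    ⁅fmod p 0, fmod p 1⁆ = (⟨⟨0, 0⟩, (p : ZMod (p ^ 2))⟩ : Hc p) := by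
  rw [fmod0, fmod1, Hcomm]
  norm_num [Fmap_zero, Fmap_one p hp]
  rfl

lemma relsat (hp : 1 < p) : ∀ r ∈ nilRels p, FreeGroup.lift (fmod p) r = 1 := by
  have hpp : (p : ZMod (p ^ 2)) * (p : ZMod (p ^ 2)) = 0 := by
    rw [← Nat.cast_mul, ← pow_two, ZMod.natCast_self]
  intro r hr
  rcases hr with rfl | rfl | rfl | rfl | rfl | rfl | rfl | rfl
  · -- x^p
    rw [map_pow, FreeGroup.lift_apply_of, fmod0, Hpow, Hone, Hmk_eq]
    norm_num [Fmap_zero, Prod.ext_iff, smulp_zmod]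
  · -- y^p
    rw [map_pow, FreeGroup.lift_apply_of, fmod1, Hpow, Hone, Hmk_eq]
    norm_num [Fmap_zero, Prod.ext_iff, smulp_zmod]
  · -- [x,y]^p
    rw [map_pow, map_commutatorElement, FreeGroup.lift_apply_of, FreeGroup.lift_apply_of, hXY p hp,
      Hpow, Hone, Hmk_eq]
    norm_num [Fmap_zero, Prod.ext_iff, nsmul_eq_mul, hpp, smulp_zmod]
  · -- [[x,y],x]
    rw [map_commutatorElement, map_commutatorElement, FreeGroup.lift_apply_of, FreeGroup.lift_apply_of,
      hXY p hp, fmod0, Hcomm, Hone, Hmk_eq]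
    norm_num [Fmap_zero]
  · -- [[x,y],y]
    rw [map_commutatorElement, map_commutatorElement, FreeGroup.lift_apply_of, FreeGroup.lift_apply_of,
      hXY p hp, fmod1, Hcomm, Hone, Hmk_eq]
    norm_num [Fmap_zero]
  · -- [x,z]
    rw [map_commutatorElement, FreeGroup.lift_apply_of, FreeGroup.lift_apply_of, fmod0, fmod2, Hcomm,
      Hone, Hmk_eq]
    norm_num [Fmap_zero]
  · -- [y,z]
    rw [map_commutatorElement, FreeGroup.lift_apply_of, FreeGroup.lift_apply_of, fmod1, fmod2, Hcomm,
      Hone, Hmk_eq]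
    norm_num [Fmap_zero]
  · -- z^p * [x,y]⁻¹
    rw [map_mul, map_inv, map_pow, map_commutatorElement, FreeGroup.lift_apply_of, FreeGroup.lift_apply_of,
      FreeGroup.lift_apply_of, hXY p hp, fmod2, mul_inv_eq_one, Hpow, Hmk_eq]
    norm_num [Fmap_zero, Prod.ext_iff, smulp_zmod, nsmul_eq_mul]

end RelSat


lemma comm_of_closure {G : Type*} [Group G] {S : Set G} (hS : Subgroup.closure S = ⊤)
    (h : ∀ a ∈ S, ∀ b ∈ S, Commute a b) : ∀ a b : G, Commute a b := by
  have step : ∀ s ∈ S, ∀ g : G, s * g = g * s := by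
    intro s hs g
    have hle : Subgroup.closure S ≤ Subgroup.centralizer {s} := by
      rw [Subgroup.closure_le]
      intro t ht
      rw [SetLike.mem_coe, Subgroup.mem_centralizer_iff]
      simp only [Set.mem_singleton_iff]
      rintro m rfl
      exact h m hs t ht
    have hg := hle (by rw [hS]; exact Subgroup.mem_top g)
    exact Subgroup.mem_centralizer_iff.mp hg s rfl
  intro a b
  have hle : Subgroup.closure S ≤ Subgroup.centralizer {a} := by
    rw [Subgroup.closure_le]
    intro t ht
    rw [SetLike.mem_coe, Subgroup.mem_centralizer_iff]
    simp only [Set.mem_singleton_iff]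
    rintro m rfl
    exact (step t ht m).symm
  have hb := hle (by rw [hS]; exact Subgroup.mem_top b)
  exact Subgroup.mem_centralizer_iff.mp hb a rfl

/-- For `p` an odd prime, the presented group
`G = ⟨x,y,z | x^p = y^p = [x,y]^p = [[x,y],x] = [[x,y],y] = [x,z] = [y,z] = 1,
z^p = [x,y]⟩` is nilpotent of class exactly 2, but is not isomorphic to any twisted
product `A ×_γ B` of abelian groups of exponent `p` (every such twisted product has
exponent `p`, while `z` has order `p²` in `G`). -/
theorem presented_group_not_twisted_product (p : ℕ) (hp : p.Prime) (hodd : Odd p) :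
    (∀ a b c : PresentedGroup (nilRels p), ⁅⁅a, b⁆, c⁆ = 1) ∧
    (∃ a b : PresentedGroup (nilRels p), a * b ≠ b * a) ∧
    (∀ (A B : Type) [AddCommGroup A] [AddCommGroup B],
      (∀ a : A, p • a = 0) → (∀ b : B, p • b = 0) →
      ∀ γ : A →+ A →+ B,
        letI : Group (A × B) := twGroup γ
        IsEmpty (PresentedGroup (nilRels p) ≃* (A × B))) := by
  haveI : NeZero p := ⟨hp.ne_zero⟩
  have hp1 : 1 < p := hp.one_lt
  have key : ∀ r ∈ nilRels p, PresentedGroup.mk (nilRels p) r = 1 := fun r hr =>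
    (QuotientGroup.eq_one_iff r).mpr (Subgroup.subset_normalClosure hr)
  let x : PresentedGroup (nilRels p) := PresentedGroup.of 0
  let y : PresentedGroup (nilRels p) := PresentedGroup.of 1
  let z : PresentedGroup (nilRels p) := PresentedGroup.of 2
  have h4 : ⁅⁅x, y⁆, x⁆ = 1 := by
    have := key _ (Set.mem_insert_of_mem _ (Set.mem_insert_of_mem _ (Set.mem_insert_of_mem _
      (Set.mem_insert _ _))))
    rw [map_commutatorElement, map_commutatorElement] at this
    exact this
  have h5 : ⁅⁅x, y⁆, y⁆ = 1 := by
    have := key _ (Set.mem_insert_of_mem _ (Set.mem_insert_of_mem _ (Set.mem_insert_of_mem _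
      (Set.mem_insert_of_mem _ (Set.mem_insert _ _)))))
    rw [map_commutatorElement, map_commutatorElement] at this
    exact this
  have h6 : ⁅x, z⁆ = 1 := by
    have := key _ (Set.mem_insert_of_mem _ (Set.mem_insert_of_mem _ (Set.mem_insert_of_mem _
      (Set.mem_insert_of_mem _ (Set.mem_insert_of_mem _ (Set.mem_insert _ _))))))
    rw [map_commutatorElement] at this
    exact this
  have h7 : ⁅y, z⁆ = 1 := by
    have := key _ (Set.mem_insert_of_mem _ (Set.mem_insert_of_mem _ (Set.mem_insert_of_mem _
      (Set.mem_insert_of_mem _ (Set.mem_insert_of_mem _ (Set.mem_insert_of_mem _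
      (Set.mem_insert _ _)))))))
    rw [map_commutatorElement] at this
    exact this
  have h8 : z ^ p = ⁅x, y⁆ := by
    have := key _ (Set.mem_insert_of_mem _ (Set.mem_insert_of_mem _ (Set.mem_insert_of_mem _
      (Set.mem_insert_of_mem _ (Set.mem_insert_of_mem _ (Set.mem_insert_of_mem _
      (Set.mem_insert_of_mem _ rfl)))))))
    rw [map_mul, map_inv, map_pow, map_commutatorElement, mul_inv_eq_one] at this
    exact this
  -- the model homomorphism
  let φ : PresentedGroup (nilRels p) →* Hc p := PresentedGroup.toGroup (relsat p hp1)
  have hφx : φ x = ⟨⟨1, 0⟩, 0⟩ := PresentedGroup.toGroup.of _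
  have hφy : φ y = ⟨⟨0, 1⟩, 0⟩ := PresentedGroup.toGroup.of _
  have hpne : (p : ZMod (p ^ 2)) ≠ 0 := p_ne_zero_zmodsq p hp1
  have hφcomm : φ ⁅x, y⁆ = (⟨⟨0, 0⟩, (p : ZMod (p ^ 2))⟩ : Hc p) := by
    rw [map_commutatorElement, hφx, hφy, Hcomm]
    norm_num [Fmap_zero, Fmap_one p hp1]
    rfl
  have hxyne : ⁅x, y⁆ ≠ 1 := by
    intro h
    rw [h, map_one, Hone, Hmk_eq] at hφcomm
    exact hpne hφcomm.2.symm
  -- nilpotency class ≤ 2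
  have hcenter : ⁅x, y⁆ ∈ Subgroup.center (PresentedGroup (nilRels p)) := by
    rw [Subgroup.mem_center_iff]
    intro g
    have hg : g ∈ Subgroup.centralizer {⁅x, y⁆} := by
      refine PresentedGroup.generated_by _ _ (fun j => ?_) g
      rw [Subgroup.mem_centralizer_iff]
      simp only [Set.mem_singleton_iff]
      rintro m rfl
      fin_cases j
      · exact commutatorElement_eq_one_iff_commute.mp h4
      · exact commutatorElement_eq_one_iff_commute.mp h5
      · exact h8 ▸ (Commute.refl z).pow_left p
    exact (Subgroup.mem_centralizer_iff.mp hg _ rfl).symm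
  have hQcomm : ∀ u v : PresentedGroup (nilRels p) ⧸ Subgroup.center (PresentedGroup (nilRels p)),
      Commute u v := by
    set π := QuotientGroup.mk' (Subgroup.center (PresentedGroup (nilRels p))) with hπ
    have hc01 : Commute (π x) (π y) := by
      refine commutatorElement_eq_one_iff_commute.mp ?_
      rw [← map_commutatorElement]
      exact (QuotientGroup.eq_one_iff _).mpr hcenter
    have hc02 : Commute (π x) (π z) := (commutatorElement_eq_one_iff_commute.mp h6).map _
    have hc12 : Commute (π y) (π z) := (commutatorElement_eq_one_iff_commute.mp h7).map _
    refine comm_of_closure (S := Set.range (fun j : Fin 3 => π (PresentedGroup.of j))) ?_ ?_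
    · have hco : (fun j : Fin 3 => π (PresentedGroup.of j))
          = π ∘ (PresentedGroup.of (rels := nilRels p)) := rfl
      rw [hco, Set.range_comp, ← MonoidHom.map_closure, PresentedGroup.closure_range_of,
        Subgroup.map_top_of_surjective _ (QuotientGroup.mk'_surjective _)]
    · rintro a ⟨i, rfl⟩ b ⟨j, rfl⟩
      fin_cases i <;> fin_cases j
      · exact Commute.refl _
      · exact hc01
      · exact hc02
      · exact hc01.symm
      · exact Commute.refl _
      · exact hc12
      · exact hc02.symm
      · exact hc12.symm
      · exact Commute.refl _
  have hcc : ∀ a b : PresentedGroup (nilRels p),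
      ⁅a, b⁆ ∈ Subgroup.center (PresentedGroup (nilRels p)) := by
    intro a b
    have : (QuotientGroup.mk' (Subgroup.center (PresentedGroup (nilRels p)))) ⁅a, b⁆ = 1 := by
      rw [map_commutatorElement]
      exact commutatorElement_eq_one_iff_commute.mpr (hQcomm _ _)
    exact (QuotientGroup.eq_one_iff _).mp this
  refine ⟨?_, ⟨x, y, ?_⟩, ?_⟩
  · intro a b c
    exact commutatorElement_eq_one_iff_commute.mpr
      ((Subgroup.mem_center_iff.mp (hcc a b) c).symm)
  · -- x * y ≠ y * x
    intro h
    have h2 : φ (x * y) = φ (y * x) := by rw [h]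
    rw [map_mul, map_mul, hφx, hφy, Hmul, Hmul, Hmk_eq] at h2
    apply hpne
    have := h2.2
    norm_num [Fmap_zero, Fmap_one p hp1] at this
    exact this
  · intro A B iA iB hA hB γ
    letI : Group (A × B) := twGroup γ
    refine ⟨fun e => ?_⟩
    have h1 : z ^ p = 1 := by
      apply e.injective
      rw [map_pow, map_one]
      exact tw_exp γ hodd hA hB (e z)
    exact hxyne (h8 ▸ h1)
end TwLemmas
end

section
/- Let A be a free abelian group and B any abelian group. Then every 2-cocycle γ : A × A → B (with trivial action) is cohomologous to a bilinear map; that is, H²(A,B) = H²_Bil(A,B). -/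
/-- `γ` is a factor set (2-cocycle with trivial action). -/
def IsFactorSet {A B : Type*} [AddCommGroup A] [AddCommGroup B] (γ : A → A → B) : Prop :=
  (∀ y : A, γ 0 y = 0) ∧ (∀ x : A, γ x 0 = 0) ∧
    ∀ x y z : A, γ x y + γ (x + y) z = γ y z + γ x (y + z)

/-- `η` is a coboundary: `η(x,y) = h(x) + h(y) - h(x+y)` for some set map `h` with `h(0)=0`. -/
def IsCoboundary {A B : Type*} [AddCommGroup A] [AddCommGroup B] (η : A → A → B) : Prop :=
  ∃ h : A → B, h 0 = 0 ∧ ∀ x y : A, η x y = h x + h y - h (x + y)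

/-- Auxiliary extension group carrier. -/
@[ext] structure ExtGrp (B A : Type*) (g : A → A → B) where
  b : B
  a : A

/-- A symmetric factor set on a free abelian group is a coboundary. -/
theorem symm_factorSet_coboundary {A B : Type*} [AddCommGroup A] [AddCommGroup B]
    [Module.Free ℤ A] (g : A → A → B) (hg : IsFactorSet g)
    (hsymm : ∀ x y, g x y = g y x) : IsCoboundary g := by
  obtain ⟨h0l, h0r, hco⟩ := hg
  letI : Add (ExtGrp B A g) := ⟨fun p q => ⟨p.b + q.b + g p.a q.a, p.a + q.a⟩⟩
  letI : Zero (ExtGrp B A g) := ⟨⟨0, 0⟩⟩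
  letI : Neg (ExtGrp B A g) := ⟨fun p => ⟨-p.b - g p.a (-p.a), -p.a⟩⟩
  letI : AddCommGroup (ExtGrp B A g) :=
    { add := (· + ·)
      zero := 0
      neg := Neg.neg
      nsmul := nsmulRec
      zsmul := zsmulRec
      add_assoc := by
        rintro ⟨a, x⟩ ⟨b, y⟩ ⟨c, z⟩
        refine ExtGrp.ext ?_ ?_
        · show a + b + g x y + c + g (x + y) z = a + (b + c + g y z) + g x (y + z)
          have := hco x y z
          -- a + b + c + (g x y + g (x+y) z) = a + b + c + (g y z + g x (y+z))
          calc a + b + g x y + c + g (x + y) z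
              = a + b + c + (g x y + g (x + y) z) := by abel
            _ = a + b + c + (g y z + g x (y + z)) := by rw [this]
            _ = a + (b + c + g y z) + g x (y + z) := by abel
        · show x + y + z = x + (y + z); exact add_assoc x y z
      zero_add := by
        rintro ⟨a, x⟩
        refine ExtGrp.ext ?_ ?_
        · show 0 + a + g 0 x = a; rw [h0l]; abel
        · show 0 + x = x; exact zero_add x
      add_zero := by
        rintro ⟨a, x⟩
        refine ExtGrp.ext ?_ ?_
        · show a + 0 + g x 0 = a; rw [h0r]; abel
        · show x + 0 = x; exact add_zero x
      neg_add_cancel := by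
        rintro ⟨a, x⟩
        refine ExtGrp.ext ?_ ?_
        · show -a - g x (-x) + a + g (-x) x = 0
          rw [hsymm (-x) x]; abel
        · show -x + x = 0; exact neg_add_cancel x
      add_comm := by
        rintro ⟨a, x⟩ ⟨b, y⟩
        refine ExtGrp.ext ?_ ?_
        · show a + b + g x y = b + a + g y x
          rw [hsymm x y]; abel
        · show x + y = y + x; exact add_comm x y }
  let π₀ : ExtGrp B A g →+ A := AddMonoidHom.mk' (fun p => p.a) (fun _ _ => rfl)
  let π : ExtGrp B A g →ₗ[ℤ] A := π₀.toIntLinearMap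
  have hsurj : Function.Surjective π := fun x => ⟨⟨0, x⟩, rfl⟩
  obtain ⟨σ, hσ⟩ := Module.projective_lifting_property π LinearMap.id hsurj
  have hσ2 : ∀ x, (σ x).a = x := fun x => DFunLike.congr_fun hσ x
  refine ⟨fun x => -(σ x).b, ?_, ?_⟩
  · have h0 : σ 0 = 0 := map_zero σ
    show -(σ 0).b = 0
    rw [h0]
    show -(0 : B) = 0
    exact neg_zero
  · intro x y
    have hadd : σ (x + y) = σ x + σ y := map_add σ x y
    have hb := congrArg ExtGrp.b hadd
    have hb' : (σ (x + y)).b = (σ x).b + (σ y).b + g x y := by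
      rw [hb]
      show (σ x).b + (σ y).b + g (σ x).a (σ y).a = _
      rw [hσ2, hσ2]
    show g x y = -(σ x).b + -(σ y).b - -(σ (x + y)).b
    rw [hb']
    abel

/-- If `A` is free abelian and `B` any abelian group, every 2-cocycle `γ : A × A → B`
is cohomologous to a bilinear map; that is, `H²(A,B) = H²_Bil(A,B)`. -/
theorem free_cocycle_cohomologous_to_bilinear {A B : Type*}
    [AddCommGroup A] [AddCommGroup B] [Module.Free ℤ A]
    (γ : A → A → B) (hγ : IsFactorSet γ) :
    ∃ β : A →+ A →+ B, IsCoboundary (fun x y => γ x y - β x y) := by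
  obtain ⟨h0l, h0r, hco⟩ := hγ
  -- the commutator pairing
  set c : A → A → B := fun x y => γ x y - γ y x with hc
  have hcanti : ∀ x y, c x y = -c y x := by intro x y; simp only [hc]; abel
  have hcaddl : ∀ x y z, c (x + y) z = c x z + c y z := by
    intro x y z
    have e1 : γ (x + y) z = γ y z + γ x (y + z) - γ x y :=
      eq_sub_of_add_eq' (hco x y z)
    have e2 : γ z (x + y) = γ z x + γ (z + x) y - γ x y := by
      rw [eq_sub_iff_add_eq]
      have h := hco z x y
      linear_combination (norm := abel) h.symm
    have e3 : γ x (y + z) = γ x z + γ (x + z) y - γ z y := by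
      rw [eq_sub_iff_add_eq]
      have h := hco x z y
      rw [add_comm z y] at h
      linear_combination (norm := abel) h.symm
    simp only [hc]
    rw [e1, e2, e3, add_comm z x]
    abel
  have hcaddr : ∀ x y z, c x (y + z) = c x y + c x z := by
    intro x y z
    rw [hcanti x (y + z), hcaddl y z x, hcanti y x, hcanti z x]
    abel
  -- package c as a bilinear (ℤ-linear) map
  have hFadd : ∀ y : A, ∀ a b : A, c (a + b) y = c a y + c b y := fun y a b => hcaddl a b y
  let F : A → A →+ B := fun y => AddMonoidHom.mk' (fun x => c x y) (hFadd y)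
  let G : A → A →+ B := fun x => AddMonoidHom.mk' (fun y => c x y) (hcaddr x)
  let Clin : A →ₗ[ℤ] A →ₗ[ℤ] B :=
    LinearMap.mk₂ ℤ c (fun a b y => hcaddl a b y)
      (fun m x y => show c (m • x) y = m • c x y from map_zsmul (F y) m x)
      (fun x a b => hcaddr x a b)
      (fun m x y => show c x (m • y) = m • c x y from map_zsmul (G x) m y)
  -- basis and order
  let ι := Module.Free.ChooseBasisIndex ℤ A
  let bb : Module.Basis ι ℤ A := Module.Free.chooseBasis ℤ A
  letI : LinearOrder ι := IsWellOrder.linearOrder WellOrderingRel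
  let βlin : A →ₗ[ℤ] A →ₗ[ℤ] B :=
    bb.constr ℤ fun i => bb.constr ℤ fun j =>
      if j < i then c (bb i) (bb j) else 0
  have hkeymap : βlin - βlin.flip = Clin := by
    refine bb.ext fun i => bb.ext fun j => ?_
    simp only [LinearMap.sub_apply, LinearMap.flip_apply, βlin, Module.Basis.constr_basis,
      Clin, LinearMap.mk₂_apply]
    rcases lt_trichotomy i j with h | h | h
    · rw [if_neg (by exact fun hh => absurd (lt_trans h hh) (lt_irrefl i)), if_pos h]
      rw [hcanti (bb i) (bb j)]; abel
    · subst h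
      simp [lt_irrefl, hc]
    · rw [if_pos h, if_neg (by exact fun hh => absurd (lt_trans h hh) (lt_irrefl j))]
      simp
  have hkey : ∀ x y, βlin x y - βlin y x = c x y := by
    intro x y
    have := DFunLike.congr_fun (DFunLike.congr_fun hkeymap x) y
    simpa [Clin] using this
  -- the bilinear map as an AddMonoidHom
  let β : A →+ A →+ B :=
    AddMonoidHom.mk' (fun x => (βlin x).toAddMonoidHom)
      (by intro x y; ext z; simp)
  have hβ : ∀ x y, β x y = βlin x y := fun x y => rfl
  refine ⟨β, ?_⟩
  have hβbil_l : ∀ x y z : A, βlin (x + y) z = βlin x z + βlin y z := by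
    intro x y z; simp
  have hβbil_r : ∀ x y z : A, βlin x (y + z) = βlin x y + βlin x z := by
    intro x y z; simp
  have hsymm : ∀ x y, γ x y - βlin x y = γ y x - βlin y x := by
    intro x y
    have := hkey x y
    simp only [hc] at this
    linear_combination (norm := abel) this.symm
  have hfs : IsFactorSet (fun x y => γ x y - (β x y : B)) := by
    refine ⟨?_, ?_, ?_⟩
    · intro y; simp [hβ, h0l]
    · intro x; simp [hβ, h0r]
    · intro x y z
      simp only [hβ]
      have h1 := hco x y z
      have h2 : βlin x y + βlin (x + y) z = βlin y z + βlin x (y + z) := by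
        rw [hβbil_l, hβbil_r]; abel
      linear_combination (norm := abel) h1 - h2
  exact symm_factorSet_coboundary _ hfs (fun x y => hsymm x y)
end
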